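/- arXiv:1802.06264 — 6 statements merged into one kernel-verified Lean document; each statement's English description precedes it below -/
import Mathlib

section
/- Let X be a complex Hilbert space, let A, B : X → X be compact self-adjoint bounded linear operators, and let r ∈ ℕ. Then the following are equivalent: (a) B − A has at most r negative eigenvalues counted with multiplicity; (b) there exists a subspace V ⊆ X with dim V ≤ r such that Re⟨(B − A)v, v⟩ ≥ 0 for all v in the orthogonal complement V⊥ of V. -/
open scoped InnerProductSpace

/-- For a (compact self-adjoint) operator `T` on a complex Hilbert space, `T` has at most `r`
negative eigenvalues counted with multiplicity: the span of the eigenspaces of `T` associated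
with negative eigenvalues has dimension at most `r`. -/
def HasAtMostNegEigenvalues {X : Type*} [NormedAddCommGroup X] [InnerProductSpace ℂ X]
    (T : X →L[ℂ] X) (r : ℕ) : Prop :=
  Module.rank ℂ
    ↥(⨆ μ : ℝ, ⨆ _ : μ < 0, Module.End.eigenspace (T : X →ₗ[ℂ] X) (μ : ℂ)) ≤ r

section Aux

variable {X : Type*} [NormedAddCommGroup X] [InnerProductSpace ℂ X]

lemma aux_inner_self (x : X) : (⟪x, x⟫_ℂ).re = ‖x‖ ^ 2 := by
  rw [inner_self_eq_norm_sq_to_K]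
  norm_cast

/-- Cauchy-Schwarz for an operator nonnegative on a subspace. -/
lemma aux_cs (T : X →L[ℂ] X) (hsym : (T : X →ₗ[ℂ] X).IsSymmetric)
    (K : Submodule ℂ X) (hpos : ∀ x ∈ K, 0 ≤ (⟪T x, x⟫_ℂ).re)
    {u y : X} (hu : u ∈ K) (hy : y ∈ K) :
    (⟪T u, y⟫_ℂ).re ^ 2 ≤ (⟪T u, u⟫_ℂ).re * (⟪T y, y⟫_ℂ).re := by
  have hswap : (⟪T y, u⟫_ℂ).re = (⟪T u, y⟫_ℂ).re := by
    have h1 : ⟪T y, u⟫_ℂ = ⟪y, T u⟫_ℂ := hsym y u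
    rw [h1]
    exact inner_re_symm (𝕜 := ℂ) y (T u)
  have h : ∀ t : ℝ, 0 ≤ (⟪T y, y⟫_ℂ).re * (t * t) + (2 * (⟪T u, y⟫_ℂ).re) * t
      + (⟪T u, u⟫_ℂ).re := by
    intro t
    have := hpos (u + (t : ℂ) • y) (K.add_mem hu (K.smul_mem _ hy))
    rw [map_add, map_smul] at this
    simp only [inner_add_left, inner_add_right, inner_smul_left, inner_smul_right,
      Complex.add_re, Complex.mul_re, Complex.conj_ofReal, Complex.ofReal_re,
      Complex.ofReal_im] at this ⊢
    rw [hswap] at this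
    ring_nf at this ⊢
    nlinarith [this]
  have := discrim_le_zero h
  rw [discrim] at this
  nlinarith [this]

lemma aux_neg_on_span (T : X →L[ℂ] X) (hsym : (T : X →ₗ[ℂ] X).IsSymmetric) {w : X}
    (hw : w ∈ ⨆ μ : ℝ, ⨆ _ : μ < 0, Module.End.eigenspace (T : X →ₗ[ℂ] X) (μ : ℂ))
    (hw0 : w ≠ 0) : (⟪T w, w⟫_ℂ).re < 0 := by
  rw [iSup_subtype'] at hw
  rw [Submodule.mem_iSup_iff_exists_finsupp] at hw
  obtain ⟨f, hf, rfl⟩ := hw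
  rw [Finsupp.sum] at hw0 ⊢
  have hT : ∀ i : {μ : ℝ // μ < 0}, T (f i) = ((i : ℝ) : ℂ) • f i := by
    intro i
    exact Module.End.mem_eigenspace_iff.mp (hf i)
  have horth : ∀ i j : {μ : ℝ // μ < 0}, i ≠ j → ⟪f i, f j⟫_ℂ = 0 := by
    intro i j hij
    have hij' : ((i : ℝ) : ℂ) ≠ ((j : ℝ) : ℂ) := by
      simpa [Complex.ofReal_inj] using Subtype.coe_injective.ne hij
    exact hsym.orthogonalFamily_eigenspaces hij' ⟨f i, hf i⟩ ⟨f j, hf j⟩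
  have key : ⟪T (∑ i ∈ f.support, f i), ∑ i ∈ f.support, f i⟫_ℂ
      = ∑ i ∈ f.support, ((i : ℝ) : ℂ) * (‖f i‖ : ℂ) ^ 2 := by
    rw [map_sum, sum_inner]
    refine Finset.sum_congr rfl fun i hi => ?_
    rw [inner_sum, Finset.sum_eq_single_of_mem i hi]
    · rw [hT i, inner_smul_left, inner_self_eq_norm_sq_to_K]
      simp [Complex.conj_ofReal]
    · intro j hj hji
      rw [hT i, inner_smul_left, horth i j (fun h => hji (h ▸ rfl)), mul_zero]
  rw [key]
  have : (∑ i ∈ f.support, ((i : ℝ) : ℂ) * (‖f i‖ : ℂ) ^ 2).re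
      = ∑ i ∈ f.support, (i : ℝ) * ‖f i‖ ^ 2 := by
    rw [Complex.re_sum]
    refine Finset.sum_congr rfl fun i _ => ?_
    rw [← Complex.ofReal_pow, ← Complex.ofReal_mul, Complex.ofReal_re]
  rw [this]
  have hne : f.support.Nonempty := by
    rcases Finset.eq_empty_or_nonempty f.support with h | h
    · exact absurd (by simp [h]) hw0
    · exact h
  apply Finset.sum_neg
  · intro i hi
    have hfi : f i ≠ 0 := Finsupp.mem_support_iff.mp hi
    have : (0:ℝ) < ‖f i‖ ^ 2 := by
      have := norm_pos_iff.mpr hfi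
      positivity
    exact mul_neg_of_neg_of_pos i.2 this
  · exact hne

lemma aux_map_le (T : X →L[ℂ] X) :
    Submodule.map (T : X →ₗ[ℂ] X)
      (⨆ μ : ℝ, ⨆ _ : μ < 0, Module.End.eigenspace (T : X →ₗ[ℂ] X) (μ : ℂ))
      ≤ ⨆ μ : ℝ, ⨆ _ : μ < 0, Module.End.eigenspace (T : X →ₗ[ℂ] X) (μ : ℂ) := by
  rw [Submodule.map_iSup]
  refine iSup_le fun μ => ?_
  rw [Submodule.map_iSup]
  refine iSup_le fun hμ => ?_
  refine le_trans ?_ (le_iSup₂ (f := fun (μ : ℝ) (_ : μ < 0) =>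
    Module.End.eigenspace (T : X →ₗ[ℂ] X) (μ : ℂ)) μ hμ)
  rintro x ⟨y, hy, rfl⟩
  simp only [SetLike.mem_coe] at hy
  rw [Module.End.mem_eigenspace_iff] at hy ⊢
  rw [hy, map_smul, hy]

lemma aux_forward [CompleteSpace X] (T : X →L[ℂ] X)
    (hcomp : IsCompactOperator T) (hsa : IsSelfAdjoint T) :
    ∀ v ∈ (⨆ μ : ℝ, ⨆ _ : μ < 0,
        Module.End.eigenspace (T : X →ₗ[ℂ] X) (μ : ℂ))ᗮ,
      0 ≤ (⟪T v, v⟫_ℂ).re := by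
  set N := ⨆ μ : ℝ, ⨆ _ : μ < 0, Module.End.eigenspace (T : X →ₗ[ℂ] X) (μ : ℂ) with hN
  by_contra hcon
  push_neg at hcon
  obtain ⟨v, hvK, hvneg⟩ := hcon
  have hsym : (T : X →ₗ[ℂ] X).IsSymmetric := hsa.isSymmetric
  set K := Nᗮ with hK
  -- K is T-invariant
  have hKinv : ∀ x ∈ K, T x ∈ K := by
    intro x hx
    rw [Submodule.mem_orthogonal] at hx ⊢
    intro n hn
    have h1 : ⟪n, T x⟫_ℂ = ⟪T n, x⟫_ℂ := (hsym n x).symm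
    rw [h1]
    exact hx _ (aux_map_le T ⟨n, hn, rfl⟩)
  -- scaling identity
  have hscale : ∀ (r : ℝ) (x : X), (⟪T ((r : ℂ) • x), (r : ℂ) • x⟫_ℂ).re
      = r ^ 2 * (⟪T x, x⟫_ℂ).re := by
    intro r x
    rw [map_smul, inner_smul_left, inner_smul_right, Complex.conj_ofReal, ← mul_assoc,
      ← Complex.ofReal_mul, Complex.re_ofReal_mul]
    ring
  have hv0 : v ≠ 0 := by
    rintro rfl
    simp at hvneg
  -- the Rayleigh infimum over the unit sphere of K
  set s : Set ℝ := (fun u : X => (⟪T u, u⟫_ℂ).re) '' {u : X | u ∈ K ∧ ‖u‖ = 1} with hs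
  have hvnorm : (0:ℝ) < ‖v‖ := norm_pos_iff.mpr hv0
  set c₀ : ℝ := ‖v‖⁻¹ with hc₀
  have hu₀K : (c₀ : ℂ) • v ∈ K := K.smul_mem _ hvK
  have hu₀n : ‖(c₀ : ℂ) • v‖ = 1 := by
    rw [norm_smul]
    simp [hc₀, abs_of_pos (inv_pos.mpr hvnorm), inv_mul_cancel₀ (ne_of_gt hvnorm)]
  have hu₀val : (⟪T ((c₀ : ℂ) • v), (c₀ : ℂ) • v⟫_ℂ).re
      = c₀ ^ 2 * (⟪T v, v⟫_ℂ).re := hscale c₀ v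
  have hs_ne : s.Nonempty := ⟨_, ⟨_, ⟨hu₀K, hu₀n⟩, rfl⟩⟩
  have hbdd : BddBelow s := by
    refine ⟨-‖T‖, ?_⟩
    rintro a ⟨u, ⟨-, hun⟩, rfl⟩
    have h1 : ‖⟪T u, u⟫_ℂ‖ ≤ ‖T‖ := by
      calc ‖⟪T u, u⟫_ℂ‖ ≤ ‖T u‖ * ‖u‖ := norm_inner_le_norm _ _
        _ ≤ (‖T‖ * ‖u‖) * ‖u‖ := by
            exact mul_le_mul_of_nonneg_right (T.le_opNorm u) (norm_nonneg u)
        _ = ‖T‖ := by rw [hun]; ring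
    have h2 : |(⟪T u, u⟫_ℂ).re| ≤ ‖⟪T u, u⟫_ℂ‖ := Complex.abs_re_le_norm _
    have := abs_le.mp (le_trans h2 h1)
    linarith [this.1]
  set m : ℝ := sInf s with hm
  have hm_neg : m < 0 := by
    refine lt_of_le_of_lt (csInf_le hbdd ⟨_, ⟨hu₀K, hu₀n⟩, rfl⟩) ?_
    show (⟪T ((c₀ : ℂ) • v), (c₀ : ℂ) • v⟫_ℂ).re < 0
    rw [hu₀val]
    have hpos₀ : (0:ℝ) < c₀ ^ 2 := by
      rw [hc₀]; positivity
    exact mul_neg_of_pos_of_neg hpos₀ hvneg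
  have hm_ne : (m : ℂ) ≠ 0 := by
    simpa using ne_of_lt hm_neg
  -- T' = T - m
  set T' : X →L[ℂ] X := T - (m : ℂ) • ContinuousLinearMap.id ℂ X with hT'
  have hT'app : ∀ x : X, T' x = T x - (m : ℂ) • x := by intro x; simp [hT']
  have hsym' : (T' : X →ₗ[ℂ] X).IsSymmetric := by
    intro x y
    have h1 : ⟪T x, y⟫_ℂ = ⟪x, T y⟫_ℂ := hsym x y
    simp only [ContinuousLinearMap.coe_coe, hT'app, inner_sub_left, inner_sub_right,
      inner_smul_left, inner_smul_right, Complex.conj_ofReal, h1]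
  have hT'sub : ∀ x : X, (⟪T' x, x⟫_ℂ).re = (⟪T x, x⟫_ℂ).re - m * ‖x‖ ^ 2 := by
    intro x
    rw [hT'app, inner_sub_left, inner_smul_left, Complex.conj_ofReal, Complex.sub_re,
      Complex.re_ofReal_mul, aux_inner_self]
  -- T' is nonnegative on K
  have hpos : ∀ x ∈ K, 0 ≤ (⟪T' x, x⟫_ℂ).re := by
    intro x hx
    by_cases hx0 : x = 0
    · simp [hx0]
    · have hxn : (0:ℝ) < ‖x‖ := norm_pos_iff.mpr hx0
      set c : ℝ := ‖x‖⁻¹ with hc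
      have huK2 : (c : ℂ) • x ∈ K := K.smul_mem _ hx
      have hun2 : ‖(c : ℂ) • x‖ = 1 := by
        rw [norm_smul]
        simp [hc, abs_of_pos (inv_pos.mpr hxn), inv_mul_cancel₀ (ne_of_gt hxn)]
      have hle : m ≤ c ^ 2 * (⟪T x, x⟫_ℂ).re := by
        have h0 := csInf_le hbdd ⟨_, ⟨huK2, hun2⟩, rfl⟩
        calc m ≤ (⟪T ((c : ℂ) • x), (c : ℂ) • x⟫_ℂ).re := h0
          _ = c ^ 2 * (⟪T x, x⟫_ℂ).re := hscale c x
      rw [hT'sub]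
      have h2 : (0:ℝ) < ‖x‖ ^ 2 := by positivity
      have h5 : c ^ 2 * ‖x‖ ^ 2 = 1 := by
        rw [hc]; field_simp
      have h6 : c ^ 2 * (⟪T x, x⟫_ℂ).re * ‖x‖ ^ 2 = (⟪T x, x⟫_ℂ).re := by
        rw [mul_comm (c ^ 2) _, mul_assoc, h5, mul_one]
      have h7 := mul_le_mul_of_nonneg_right hle h2.le
      linarith [h7, h6.symm ▸ h7]
  -- choose an infimizing sequence
  have hseq : ∀ n : ℕ, ∃ u : X, u ∈ K ∧ ‖u‖ = 1 ∧
      (⟪T u, u⟫_ℂ).re < m + 1 / (n + 1) := by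
    intro n
    have hlt : m < m + 1 / (n + 1 : ℝ) := by
      have : (0:ℝ) < 1 / (n + 1 : ℝ) := by positivity
      linarith
    obtain ⟨a, ⟨u, ⟨hu1, hu2⟩, rfl⟩, ha⟩ := exists_lt_of_csInf_lt hs_ne hlt
    exact ⟨u, hu1, hu2, ha⟩
  choose u huK hun huval using hseq
  set y : ℕ → X := fun n => T' (u n) with hy
  have hyK : ∀ n, y n ∈ K := by
    intro n
    rw [hy]
    simp only [hT'app]
    exact K.sub_mem (hKinv _ (huK n)) (K.smul_mem _ (huK n))
  have hQu : ∀ n, (⟪T' (u n), u n⟫_ℂ).re < 1 / (n + 1) := by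
    intro n
    rw [hT'sub, hun n]
    have := huval n
    linarith
  have hQu0 : ∀ n, 0 ≤ (⟪T' (u n), u n⟫_ℂ).re := fun n => hpos _ (huK n)
  -- Cauchy-Schwarz bound
  have hyn : ∀ n, ‖y n‖ ^ 2 ≤ ‖T'‖ * (1 / (n + 1)) := by
    intro n
    have hcs := aux_cs T' hsym' K hpos (huK n) (hyK n)
    have h1 : (⟪T' (u n), y n⟫_ℂ).re = ‖y n‖ ^ 2 := by
      show (⟪T' (u n), T' (u n)⟫_ℂ).re = ‖T' (u n)‖ ^ 2
      exact aux_inner_self _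
    have h2 : (⟪T' (y n), y n⟫_ℂ).re ≤ ‖T'‖ * ‖y n‖ ^ 2 := by
      have ha : |(⟪T' (y n), y n⟫_ℂ).re| ≤ ‖⟪T' (y n), y n⟫_ℂ‖ := Complex.abs_re_le_norm _
      have hb : ‖⟪T' (y n), y n⟫_ℂ‖ ≤ ‖T' (y n)‖ * ‖y n‖ := norm_inner_le_norm _ _
      have hc : ‖T' (y n)‖ * ‖y n‖ ≤ (‖T'‖ * ‖y n‖) * ‖y n‖ :=
        mul_le_mul_of_nonneg_right (T'.le_opNorm _) (norm_nonneg _)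
      have := (abs_le.mp (ha.trans (hb.trans hc))).2
      nlinarith [this]
    rw [h1] at hcs
    have hT'nn : (0:ℝ) ≤ ‖T'‖ := norm_nonneg _
    have hynn : (0:ℝ) ≤ ‖y n‖ ^ 2 := by positivity
    by_cases h0 : ‖y n‖ ^ 2 = 0
    · rw [h0]; positivity
    · have hpos' : (0:ℝ) < ‖y n‖ ^ 2 := lt_of_le_of_ne hynn (Ne.symm h0)
      have key : ‖y n‖ ^ 2 ≤ ‖T'‖ * (⟪T' (u n), u n⟫_ℂ).re := by
        nlinarith [hcs, h2, hpos', hQu0 n]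
      calc ‖y n‖ ^ 2 ≤ ‖T'‖ * (⟪T' (u n), u n⟫_ℂ).re := key
        _ ≤ ‖T'‖ * (1 / (n + 1)) := by
            exact mul_le_mul_of_nonneg_left (le_of_lt (hQu n)) hT'nn
  -- y tends to 0
  have hytend : Filter.Tendsto y Filter.atTop (nhds 0) := by
    have hb : ∀ n : ℕ, ‖y n‖ ≤ Real.sqrt (‖T'‖ * (1 / (n + 1))) := by
      intro n
      have h1 : ‖y n‖ = Real.sqrt (‖y n‖ ^ 2) := (Real.sqrt_sq (norm_nonneg _)).symm
      rw [h1]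
      exact Real.sqrt_le_sqrt (hyn n)
    have hg : Filter.Tendsto (fun n : ℕ => Real.sqrt (‖T'‖ * (1 / (n + 1))))
        Filter.atTop (nhds 0) := by
      have h1 : Filter.Tendsto (fun n : ℕ => ‖T'‖ * (1 / (n + 1))) Filter.atTop
          (nhds (‖T'‖ * 0)) :=
        tendsto_one_div_add_atTop_nhds_zero_nat.const_mul _
      rw [mul_zero] at h1
      have h2 := (Real.continuous_sqrt.tendsto 0).comp h1
      rw [Real.sqrt_zero] at h2
      exact h2
    exact squeeze_zero_norm hb hg
  -- compactness: extract convergent subsequence of T (u n)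
  have hcpt : IsCompact (closure (T '' Metric.closedBall 0 1)) :=
    hcomp.isCompact_closure_image_closedBall 1
  have hmem : ∀ n, T (u n) ∈ closure (T '' Metric.closedBall 0 1) := by
    intro n
    apply subset_closure
    exact Set.mem_image_of_mem _ (by simp [Metric.mem_closedBall, dist_zero_right, hun n])
  obtain ⟨a, -, φ, hφ, hconv⟩ := hcpt.tendsto_subseq hmem
  -- u ∘ φ converges
  have hurep : ∀ n, u n = (m : ℂ)⁻¹ • (T (u n) - y n) := by
    intro n
    rw [hy]
    simp only [hT'app]
    rw [sub_sub_cancel, smul_smul, inv_mul_cancel₀ hm_ne, one_smul]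
  have hytendφ : Filter.Tendsto (fun k => y (φ k)) Filter.atTop (nhds 0) :=
    hytend.comp hφ.tendsto_atTop
  have hudiff : Filter.Tendsto (fun k => T (u (φ k)) - y (φ k)) Filter.atTop
      (nhds (a - 0)) := hconv.sub hytendφ
  rw [sub_zero] at hudiff
  have huconv : Filter.Tendsto (fun k => u (φ k)) Filter.atTop
      (nhds ((m : ℂ)⁻¹ • a)) := by
    have := hudiff.const_smul ((m : ℂ)⁻¹)
    refine this.congr fun k => ?_
    exact (hurep (φ k)).symm
  set w : X := (m : ℂ)⁻¹ • a with hw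
  have hwnorm : ‖w‖ = 1 := by
    have h1 : Filter.Tendsto (fun k => ‖u (φ k)‖) Filter.atTop (nhds ‖w‖) :=
      (continuous_norm.tendsto w).comp huconv
    have h2 : (fun k => ‖u (φ k)‖) = fun _ => (1:ℝ) := funext fun k => hun (φ k)
    rw [h2] at h1
    exact (tendsto_const_nhds_iff.mp h1).symm
  have hwK : w ∈ K := by
    have : IsClosed (K : Set X) := N.isClosed_orthogonal
    exact this.mem_of_tendsto huconv (Filter.Eventually.of_forall fun k => huK (φ k))
  have hTw : T w = a := by
    have h1 : Filter.Tendsto (fun k => T (u (φ k))) Filter.atTop (nhds (T w)) :=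
      (T.continuous.tendsto w).comp huconv
    exact tendsto_nhds_unique h1 hconv
  have haw : a = (m : ℂ) • w := by
    rw [hw, smul_smul, mul_inv_cancel₀ hm_ne, one_smul]
  have hwN : w ∈ N := by
    have heig : w ∈ Module.End.eigenspace (T : X →ₗ[ℂ] X) ((m : ℝ) : ℂ) := by
      rw [Module.End.mem_eigenspace_iff]
      show T w = (m : ℂ) • w
      rw [hTw, haw]
    exact le_iSup₂ (f := fun (μ : ℝ) (_ : μ < 0) =>
      Module.End.eigenspace (T : X →ₗ[ℂ] X) (μ : ℂ)) m hm_neg heig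
  have : w = 0 := by
    have := (Submodule.orthogonal_disjoint N).le_bot ⟨hwN, hwK⟩
    simpa using this
  rw [this] at hwnorm
  simp at hwnorm

end Aux

theorem statement0 {X : Type*} [NormedAddCommGroup X] [InnerProductSpace ℂ X]
    [CompleteSpace X] (A B : X →L[ℂ] X)
    (hAcomp : IsCompactOperator A) (hBcomp : IsCompactOperator B)
    (hAsa : IsSelfAdjoint A) (hBsa : IsSelfAdjoint B) (r : ℕ) :
    HasAtMostNegEigenvalues (B - A) r ↔
      ∃ V : Submodule ℂ X, Module.rank ℂ V ≤ r ∧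
        ∀ v ∈ Vᗮ, 0 ≤ (⟪(B - A) v, v⟫_ℂ).re := by
  set T : X →L[ℂ] X := B - A with hTdef
  have hcomp : IsCompactOperator T := by
    have := hBcomp.sub hAcomp
    rwa [hTdef, show ⇑(B - A) = ⇑B - ⇑A from rfl]
  have hsa : IsSelfAdjoint T := hBsa.sub hAsa
  have hsym : (T : X →ₗ[ℂ] X).IsSymmetric := hsa.isSymmetric
  constructor
  · intro h
    exact ⟨_, h, aux_forward T hcomp hsa⟩
  · rintro ⟨V, hVrank, hVpos⟩
    unfold HasAtMostNegEigenvalues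
    by_contra hcon
    set N := ⨆ μ : ℝ, ⨆ _ : μ < 0, Module.End.eigenspace (T : X →ₗ[ℂ] X) (μ : ℂ) with hN
    have hVfin : FiniteDimensional ℂ V := by
      have : Module.rank ℂ V < Cardinal.aleph0 :=
        lt_of_le_of_lt hVrank (Cardinal.nat_lt_aleph0 r)
      exact Module.rank_lt_aleph0_iff.mp this
    set f : N →ₗ[ℂ] V :=
      (Submodule.orthogonalProjectionOnto V).toLinearMap.comp N.subtype with hf
    have hinj : ¬ Function.Injective f := by
      intro hinjf
      exact hcon (le_trans (f.rank_le_of_injective hinjf) hVrank)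
    rw [← LinearMap.ker_eq_bot] at hinj
    obtain ⟨w, hwker, hw0⟩ := (Submodule.ne_bot_iff _).mp hinj
    have hwV : (w : X) ∈ Vᗮ := by
      rw [← Submodule.orthogonalProjectionOnto_eq_zero_iff]
      exact hwker
    have h1 : 0 ≤ (⟪T (w : X), (w : X)⟫_ℂ).re := hVpos _ hwV
    have h2 : (⟪T (w : X), (w : X)⟫_ℂ).re < 0 :=
      aux_neg_on_span T hsym w.2 (by simpa using hw0)
    linarith
end

section
/- Let H be a complex Hilbert space, let T : H → H be a compact self-adjoint bounded linear operator, and let c > 0. Then the subspace W ⊆ H spanned by all eigenspaces of T associated with eigenvalues larger than c is finite-dimensional, and Re⟨Tw, w⟩ ≤ c‖w‖² for all w in the orthogonal complement W⊥ of W. -/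
open scoped InnerProductSpace

open Filter Topology

/-- Diagonal computation for inner products of sums of pairwise-orthogonal families. -/
lemma aux_inner_sum_sum {H : Type*} [NormedAddCommGroup H] [InnerProductSpace ℂ H]
    {ι : Type*} (s : Finset ι) (w v : ι → H)
    (h : ∀ i ∈ s, ∀ j ∈ s, i ≠ j → ⟪w i, v j⟫_ℂ = 0) :
    ⟪∑ i ∈ s, w i, ∑ j ∈ s, v j⟫_ℂ = ∑ i ∈ s, ⟪w i, v i⟫_ℂ := by
  rw [sum_inner]
  refine Finset.sum_congr rfl fun i hi => ?_
  rw [inner_sum]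
  exact Finset.sum_eq_single_of_mem i hi fun j hj hji => h i hi j hj (Ne.symm hji)

/-- A compact symmetric operator whose quadratic form exceeds `c` somewhere has an
eigenvalue larger than `c`. -/
lemma aux_exists_eigenvector {E : Type*} [NormedAddCommGroup E] [InnerProductSpace ℂ E]
    [CompleteSpace E] (A : E →L[ℂ] E) (hcomp : IsCompactOperator A)
    (hsym : ∀ x y : E, ⟪A x, y⟫_ℂ = ⟪x, A y⟫_ℂ)
    {c : ℝ} (hc : 0 < c) {u : E} (hu : c * ‖u‖ ^ 2 < (⟪A u, u⟫_ℂ).re) :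
    ∃ μ : ℝ, c < μ ∧ ∃ v : E, v ≠ 0 ∧ A v = (μ : ℂ) • v := by
  classical
  have hu0 : u ≠ 0 := by
    rintro rfl
    simp at hu
  -- rescaling computation
  have hres : ∀ z : E, (⟪A (((‖z‖⁻¹ : ℝ) : ℂ) • z), ((‖z‖⁻¹ : ℝ) : ℂ) • z⟫_ℂ).re
      = ‖z‖⁻¹ * ‖z‖⁻¹ * (⟪A z, z⟫_ℂ).re := by
    intro z
    have h1 : ⟪A (((‖z‖⁻¹ : ℝ) : ℂ) • z), ((‖z‖⁻¹ : ℝ) : ℂ) • z⟫_ℂ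
        = ((‖z‖⁻¹ * ‖z‖⁻¹ : ℝ) : ℂ) * ⟪A z, z⟫_ℂ := by
      rw [map_smul, inner_smul_left, inner_smul_right, Complex.conj_ofReal]
      push_cast
      ring
    rw [h1, Complex.re_ofReal_mul]
  have hnorm1 : ∀ z : E, z ≠ 0 → ‖((‖z‖⁻¹ : ℝ) : ℂ) • z‖ = 1 := by
    intro z hz
    rw [norm_smul, Complex.norm_real, Real.norm_eq_abs,
      abs_of_nonneg (inv_nonneg.mpr (norm_nonneg z)),
      inv_mul_cancel₀ (norm_ne_zero_iff.mpr hz)]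
  set Sset : Set ℝ := (fun x : E => (⟪A x, x⟫_ℂ).re) '' Metric.sphere (0 : E) 1 with hSset
  have hu' : c < (⟪A (((‖u‖⁻¹ : ℝ) : ℂ) • u), ((‖u‖⁻¹ : ℝ) : ℂ) • u⟫_ℂ).re := by
    rw [hres]
    have ht : (0:ℝ) < ‖u‖ := norm_pos_iff.mpr hu0
    have h1 : (0:ℝ) < ‖u‖⁻¹ * ‖u‖⁻¹ := by positivity
    have h2 : ‖u‖⁻¹ * ‖u‖⁻¹ * (c * ‖u‖ ^ 2) = c := by
      field_simp
    calc c = ‖u‖⁻¹ * ‖u‖⁻¹ * (c * ‖u‖ ^ 2) := h2.symm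
      _ < ‖u‖⁻¹ * ‖u‖⁻¹ * (⟪A u, u⟫_ℂ).re := by
          exact mul_lt_mul_of_pos_left hu h1
  have humem : (((‖u‖⁻¹ : ℝ) : ℂ) • u) ∈ Metric.sphere (0 : E) 1 := by
    rw [mem_sphere_zero_iff_norm]
    exact hnorm1 u hu0
  have hSne : Sset.Nonempty := ⟨_, ⟨_, humem, rfl⟩⟩
  have hSbdd : BddAbove Sset := by
    refine ⟨‖A‖, ?_⟩
    rintro r ⟨x, hx, rfl⟩
    have hx1 : ‖x‖ = 1 := mem_sphere_zero_iff_norm.mp hx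
    calc (⟪A x, x⟫_ℂ).re ≤ ‖⟪A x, x⟫_ℂ‖ := Complex.re_le_norm _
      _ = ‖⟪A x, x⟫_ℂ‖ := rfl
      _ ≤ ‖A x‖ * ‖x‖ := norm_inner_le_norm _ _
      _ ≤ ‖A‖ * ‖x‖ * ‖x‖ := mul_le_mul_of_nonneg_right (A.le_opNorm x) (norm_nonneg x)
      _ = ‖A‖ := by rw [hx1]; ring
  set M : ℝ := sSup Sset with hM
  have hcM : c < M := lt_of_lt_of_le hu' (le_csSup hSbdd ⟨_, humem, rfl⟩)
  have hMpos : 0 < M := hc.trans hcM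
  -- M bounds the quadratic form everywhere
  have hAle : ∀ z : E, (⟪A z, z⟫_ℂ).re ≤ M * ‖z‖ ^ 2 := by
    intro z
    rcases eq_or_ne z 0 with rfl | hz
    · simp
    · have hmem : (((‖z‖⁻¹ : ℝ) : ℂ) • z) ∈ Metric.sphere (0 : E) 1 := by
        rw [mem_sphere_zero_iff_norm]; exact hnorm1 z hz
      have hle : (⟪A (((‖z‖⁻¹ : ℝ) : ℂ) • z), ((‖z‖⁻¹ : ℝ) : ℂ) • z⟫_ℂ).re ≤ M :=
        le_csSup hSbdd ⟨_, hmem, rfl⟩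
      rw [hres] at hle
      have ht : (0:ℝ) < ‖z‖ := norm_pos_iff.mpr hz
      calc (⟪A z, z⟫_ℂ).re = (‖z‖⁻¹ * ‖z‖⁻¹ * (⟪A z, z⟫_ℂ).re) * ‖z‖ ^ 2 := by
            field_simp
        _ ≤ M * ‖z‖ ^ 2 := by
            apply mul_le_mul_of_nonneg_right hle (by positivity)
  -- maximizing sequence
  have hseq : ∀ n : ℕ, ∃ x : E, ‖x‖ = 1 ∧ M - 1 / ((n:ℝ) + 1) < (⟪A x, x⟫_ℂ).re := by
    intro n
    have hlt : M - 1 / ((n:ℝ) + 1) < M := by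
      have : (0:ℝ) < 1 / ((n:ℝ) + 1) := by positivity
      linarith
    obtain ⟨r, hrS, hr⟩ := exists_lt_of_lt_csSup hSne hlt
    obtain ⟨x, hx, rfl⟩ := hrS
    exact ⟨x, mem_sphere_zero_iff_norm.mp hx, hr⟩
  choose x hx1 hx2 using hseq
  have hxmem : ∀ n, (⟪A (x n), x n⟫_ℂ).re ≤ M := by
    intro n
    have := hAle (x n)
    rw [hx1 n] at this
    simpa using this
  have htend : Tendsto (fun n => (⟪A (x n), x n⟫_ℂ).re) atTop (𝓝 M) := by
    have hlow : Tendsto (fun n : ℕ => M - 1 / ((n:ℝ) + 1)) atTop (𝓝 M) := by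
      have := tendsto_one_div_add_atTop_nhds_zero_nat (𝕜 := ℝ)
      have h2 := (tendsto_const_nhds (x := M) (f := atTop)).sub this
      simpa using h2
    exact tendsto_of_tendsto_of_tendsto_of_le_of_le hlow tendsto_const_nhds
      (fun n => le_of_lt (hx2 n)) hxmem
  -- the shifted operator `f z = A z + ‖A‖ • z` has a nonnegative quadratic form
  set r : ℂ := ((‖A‖ : ℝ) : ℂ) with hr
  set f : E → E := fun z => A z + r • z with hf
  have habs : ∀ z : E, |(⟪A z, z⟫_ℂ).re| ≤ ‖A‖ * ‖z‖ ^ 2 := by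
    intro z
    calc |(⟪A z, z⟫_ℂ).re| ≤ ‖⟪A z, z⟫_ℂ‖ := Complex.abs_re_le_norm _
      _ = ‖⟪A z, z⟫_ℂ‖ := rfl
      _ ≤ ‖A z‖ * ‖z‖ := norm_inner_le_norm _ _
      _ ≤ ‖A‖ * ‖z‖ * ‖z‖ := mul_le_mul_of_nonneg_right (A.le_opNorm z) (norm_nonneg z)
      _ = ‖A‖ * ‖z‖ ^ 2 := by ring
  set N : ℝ := M + ‖A‖ with hN
  have hNpos : 0 < N := add_pos_of_pos_of_nonneg hMpos (norm_nonneg _)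
  have hfre : ∀ z : E, (⟪f z, z⟫_ℂ).re = (⟪A z, z⟫_ℂ).re + ‖A‖ * ‖z‖ ^ 2 := by
    intro z
    have h1 : (⟪r • z, z⟫_ℂ).re = ‖A‖ * ‖z‖ ^ 2 := by
      rw [hr, inner_smul_left, Complex.conj_ofReal, Complex.re_ofReal_mul,
        show (⟪z, z⟫_ℂ).re = ‖z‖ ^ 2 from inner_self_eq_norm_sq (𝕜 := ℂ) z]
    simp only [hf]
    rw [inner_add_left, Complex.add_re, h1]
  have hQpos : ∀ z : E, 0 ≤ (⟪f z, z⟫_ℂ).re := by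
    intro z
    rw [hfre]
    linarith [neg_abs_le ((⟪A z, z⟫_ℂ).re), habs z]
  have hQle : ∀ z : E, (⟪f z, z⟫_ℂ).re ≤ N * ‖z‖ ^ 2 := by
    intro z
    rw [hfre]
    have h1 : N * ‖z‖ ^ 2 = M * ‖z‖ ^ 2 + ‖A‖ * ‖z‖ ^ 2 := by rw [hN]; ring
    linarith [hAle z]
  have hfsym : ∀ p q : E, ⟪f p, q⟫_ℂ = ⟪p, f q⟫_ℂ := by
    intro p q
    simp only [hf]
    rw [inner_add_left, inner_add_right, hsym, inner_smul_left, inner_smul_right, hr,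
      Complex.conj_ofReal]
  have hpol : ∀ p q : E, 4 * (⟪f p, q⟫_ℂ).re
      = (⟪f (p + q), p + q⟫_ℂ).re - (⟪f (p - q), p - q⟫_ℂ).re := by
    intro p q
    have hfa : f (p + q) = f p + f q := by
      simp only [hf, map_add, smul_add]
      abel
    have hfs : f (p - q) = f p - f q := by
      simp only [hf, map_sub, smul_sub]
      abel
    have h1 : ⟪f (p + q), p + q⟫_ℂ - ⟪f (p - q), p - q⟫_ℂ
        = 2 * ⟪f p, q⟫_ℂ + 2 * ⟪f q, p⟫_ℂ := by
      rw [hfa, hfs, inner_add_left, inner_add_right, inner_add_right, inner_sub_left,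
        inner_sub_right, inner_sub_right]
      ring
    have h2 : (⟪f q, p⟫_ℂ).re = (⟪f p, q⟫_ℂ).re := by
      rw [hfsym q p, ← inner_conj_symm]
      exact Complex.conj_re _
    have h3 := congrArg Complex.re h1
    rw [Complex.sub_re, Complex.add_re] at h3
    have h4 : (2 * ⟪f p, q⟫_ℂ).re = 2 * (⟪f p, q⟫_ℂ).re := by
      simp [Complex.mul_re]
    have h5 : (2 * ⟪f q, p⟫_ℂ).re = 2 * (⟪f q, p⟫_ℂ).re := by
      simp [Complex.mul_re]
    linarith
  have hfb : ∀ p q : E, ‖p‖ = 1 → ‖q‖ = 1 → (⟪f p, q⟫_ℂ).re ≤ N := by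
    intro p q hp hq
    have h1 := hpol p q
    have h2 : (⟪f (p + q), p + q⟫_ℂ).re ≤ N * ‖p + q‖ ^ 2 := hQle _
    have h3 : 0 ≤ (⟪f (p - q), p - q⟫_ℂ).re := hQpos _
    have h4 : ‖p + q‖ ≤ 2 := by
      calc ‖p + q‖ ≤ ‖p‖ + ‖q‖ := norm_add_le _ _
        _ = 2 := by rw [hp, hq]; norm_num
    have h6 : ‖p + q‖ ^ 2 ≤ 4 := by nlinarith [norm_nonneg (p + q)]
    have h5 : N * ‖p + q‖ ^ 2 ≤ N * 4 := mul_le_mul_of_nonneg_left h6 hNpos.le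
    linarith
  have hfnorm : ∀ p : E, ‖p‖ = 1 → ‖f p‖ ≤ N := by
    intro p hp
    rcases eq_or_ne (f p) 0 with h0 | h0
    · rw [h0, norm_zero]; exact hNpos.le
    · have hq1 : ‖((‖f p‖⁻¹ : ℝ) : ℂ) • f p‖ = 1 := hnorm1 _ h0
      have h1 : (⟪f p, ((‖f p‖⁻¹ : ℝ) : ℂ) • f p⟫_ℂ).re = ‖f p‖ := by
        rw [inner_smul_right, Complex.re_ofReal_mul,
          show (⟪f p, f p⟫_ℂ).re = ‖f p‖ ^ 2 from inner_self_eq_norm_sq (𝕜 := ℂ) (f p), pow_two,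
          ← mul_assoc, inv_mul_cancel₀ (norm_ne_zero_iff.mpr h0), one_mul]
      have h2 := hfb p _ hp hq1
      linarith [h1 ▸ h2]
  -- key estimate
  have hgle : ∀ n, ‖A (x n) - (M : ℂ) • x n‖ ^ 2
      ≤ 2 * N * (M - (⟪A (x n), x n⟫_ℂ).re) := by
    intro n
    have hscal : ((N : ℝ) : ℂ) = (M : ℂ) + r := by
      rw [hN, hr]; push_cast; ring
    have hfx : A (x n) - (M : ℂ) • x n = f (x n) - ((N : ℝ) : ℂ) • x n := by
      simp only [hf, hscal, add_smul]
      abel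
    have e1 : (⟪f (x n), ((N : ℝ) : ℂ) • x n⟫_ℂ).re = N * (⟪f (x n), x n⟫_ℂ).re := by
      rw [inner_smul_right, Complex.re_ofReal_mul]
    have e2 : ‖((N : ℝ) : ℂ) • x n‖ = N := by
      rw [norm_smul, Complex.norm_real, Real.norm_eq_abs, abs_of_pos hNpos, hx1 n, mul_one]
    have e3 : ‖f (x n) - ((N : ℝ) : ℂ) • x n‖ ^ 2
        = ‖f (x n)‖ ^ 2 - 2 * (⟪f (x n), ((N : ℝ) : ℂ) • x n⟫_ℂ).re
          + ‖((N : ℝ) : ℂ) • x n‖ ^ 2 := by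
      have := @norm_sub_sq ℂ E _ _ _ (f (x n)) (((N : ℝ) : ℂ) • x n)
      exact this
    rw [e1, e2] at e3
    have e4 : ‖f (x n)‖ ^ 2 ≤ N ^ 2 := by
      nlinarith [hfnorm (x n) (hx1 n), norm_nonneg (f (x n))]
    have e5 : (⟪f (x n), x n⟫_ℂ).re = (⟪A (x n), x n⟫_ℂ).re + ‖A‖ := by
      rw [hfre, hx1 n]; ring
    rw [hfx, e3, e5]
    have hNe : N = M + ‖A‖ := hN
    nlinarith [e4]
  -- the defect tends to zero
  have htendg : Tendsto (fun n => A (x n) - (M : ℂ) • x n) atTop (𝓝 0) := by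
    rw [tendsto_zero_iff_norm_tendsto_zero]
    have h2 : Tendsto (fun n => 2 * N * (M - (⟪A (x n), x n⟫_ℂ).re)) atTop (𝓝 0) := by
      have h3 := (tendsto_const_nhds (x := M) (f := atTop)).sub htend
      have h4 := h3.const_mul (2 * N)
      simpa using h4
    have hsq : Tendsto (fun n => ‖A (x n) - (M : ℂ) • x n‖ ^ 2) atTop (𝓝 0) :=
      squeeze_zero (fun n => by positivity) hgle h2
    have h5 := hsq.sqrt
    have h6 : (fun n => Real.sqrt (‖A (x n) - (M : ℂ) • x n‖ ^ 2))
        = fun n => ‖A (x n) - (M : ℂ) • x n‖ :=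
      funext fun n => Real.sqrt_sq (norm_nonneg _)
    rw [h6] at h5
    simpa using h5
  -- extract a convergent subsequence using compactness
  have hball : ∀ n, A (x n) ∈ closure (A '' Metric.closedBall 0 1) := by
    intro n
    exact subset_closure ⟨x n, by rw [Metric.mem_closedBall, dist_zero_right, hx1 n], rfl⟩
  have hK : IsCompact (closure (A '' Metric.closedBall 0 1)) := by
    have := hcomp.isCompact_closure_image_closedBall (𝕜₁ := ℂ) (f := (A : E →ₗ[ℂ] E)) 1
    simpa using this
  obtain ⟨y, hy, φ, hφ, hAy⟩ := hK.tendsto_subseq hball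
  have hAy' : Tendsto (fun n => A (x (φ n))) atTop (𝓝 y) := hAy
  have hMx : Tendsto (fun n => (M : ℂ) • x (φ n)) atTop (𝓝 y) := by
    have h1 := hAy'.sub (htendg.comp hφ.tendsto_atTop)
    simp only [Function.comp] at h1
    have h2 : (fun n => A (x (φ n)) - (A (x (φ n)) - (M : ℂ) • x (φ n)))
        = fun n => (M : ℂ) • x (φ n) := funext fun n => by abel
    rw [h2] at h1
    simpa using h1
  have hMne : (M : ℂ) ≠ 0 := by
    simpa using hMpos.ne'
  have hxlim : Tendsto (fun n => x (φ n)) atTop (𝓝 ((M : ℂ)⁻¹ • y)) := by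
    have h1 := hMx.const_smul ((M : ℂ)⁻¹)
    have h2 : ∀ w : E, (M : ℂ)⁻¹ • (M : ℂ) • w = w := fun w => by
      rw [smul_smul, inv_mul_cancel₀ hMne, one_smul]
    exact h1.congr fun n => h2 _
  set v : E := (M : ℂ)⁻¹ • y with hv
  have hvnorm : ‖v‖ = 1 := by
    have h1 : Tendsto (fun n => ‖x (φ n)‖) atTop (𝓝 ‖v‖) := hxlim.norm
    have h2 : (fun n => ‖x (φ n)‖) = fun _ => (1 : ℝ) := funext fun n => hx1 _
    rw [h2] at h1
    exact tendsto_nhds_unique h1 tendsto_const_nhds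
  have hAv : A v = (M : ℂ) • v := by
    have h1 : Tendsto (fun n => A (x (φ n))) atTop (𝓝 (A v)) :=
      (A.continuous.tendsto v).comp hxlim
    have h3 : A v = y := tendsto_nhds_unique h1 hAy'
    rw [h3, hv, smul_smul, mul_inv_cancel₀ hMne, one_smul]
  exact ⟨M, hcM, v, fun h => by simp [h] at hvnorm, hAv⟩

theorem statement2 {H : Type*} [NormedAddCommGroup H] [InnerProductSpace ℂ H]
    [CompleteSpace H] (T : H →L[ℂ] H)
    (hTcomp : IsCompactOperator T) (hTsa : IsSelfAdjoint T)
    (c : ℝ) (hc : 0 < c) :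
    FiniteDimensional ℂ
      ↥(⨆ μ : ℝ, ⨆ _ : c < μ, Module.End.eigenspace (T : H →ₗ[ℂ] H) (μ : ℂ)) ∧
    ∀ w ∈ (⨆ μ : ℝ, ⨆ _ : c < μ, Module.End.eigenspace (T : H →ₗ[ℂ] H) (μ : ℂ))ᗮ,
      (⟪T w, w⟫_ℂ).re ≤ c * ‖w‖ ^ 2 := by
  classical
  have hsymT : (T : H →ₗ[ℂ] H).IsSymmetric := hTsa.isSymmetric
  set W : Submodule ℂ H :=
    ⨆ μ : ℝ, ⨆ _ : c < μ, Module.End.eigenspace (T : H →ₗ[ℂ] H) (μ : ℂ) with hW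
  -- `T` is bounded below on `W`
  have hWnorm : ∀ y ∈ W, c * ‖y‖ ≤ ‖T y‖ := by
    intro y hy
    rw [hW, iSup_subtype'] at hy
    rw [Submodule.mem_iSup_iff_exists_finsupp] at hy
    obtain ⟨F, hF, hsum⟩ := hy
    have hys : y = ∑ i ∈ F.support, F i := hsum.symm
    have horth : ∀ i j : {μ : ℝ // c < μ}, i ≠ j → ⟪F i, F j⟫_ℂ = 0 := by
      intro i j hij
      have hne : ((i : ℝ) : ℂ) ≠ ((j : ℝ) : ℂ) := by
        simp only [ne_eq, Complex.ofReal_inj]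
        exact fun h => hij (Subtype.ext h)
      exact hsymT.orthogonalFamily_eigenspaces hne ⟨F i, hF i⟩ ⟨F j, hF j⟩
    have hTF : ∀ i : {μ : ℝ // c < μ}, (T : H →ₗ[ℂ] H) (F i) = ((i : ℝ) : ℂ) • F i :=
      fun i => Module.End.mem_eigenspace_iff.mp (hF i)
    have hy2 : ‖y‖ ^ 2 = ∑ i ∈ F.support, ‖F i‖ ^ 2 := by
      have h1 : ⟪y, y⟫_ℂ = ∑ i ∈ F.support, ⟪F i, F i⟫_ℂ := by
        rw [hys]
        exact aux_inner_sum_sum _ _ _ fun i _ j _ hij => horth i j hij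
      have h2 := congrArg Complex.re h1
      rw [show (⟪y, y⟫_ℂ).re = ‖y‖ ^ 2 from inner_self_eq_norm_sq (𝕜 := ℂ) y] at h2
      rw [h2, Complex.re_sum]
      exact Finset.sum_congr rfl fun i _ =>
        show (⟪F i, F i⟫_ℂ).re = ‖F i‖ ^ 2 from inner_self_eq_norm_sq (𝕜 := ℂ) (F i)
    have hTy : T y = ∑ i ∈ F.support, ((i : ℝ) : ℂ) • F i := by
      calc T y = (T : H →ₗ[ℂ] H) (∑ i ∈ F.support, F i) := by rw [← hys]; rfl
        _ = ∑ i ∈ F.support, (T : H →ₗ[ℂ] H) (F i) := map_sum _ _ _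
        _ = ∑ i ∈ F.support, ((i : ℝ) : ℂ) • F i := Finset.sum_congr rfl fun i _ => hTF i
    have hTy2 : ‖T y‖ ^ 2 = ∑ i ∈ F.support, ((i : ℝ) * (i : ℝ)) * ‖F i‖ ^ 2 := by
      have h1 : ⟪T y, T y⟫_ℂ
          = ∑ i ∈ F.support, ⟪((i : ℝ) : ℂ) • F i, ((i : ℝ) : ℂ) • F i⟫_ℂ := by
        rw [hTy]
        refine aux_inner_sum_sum _ _ _ fun i _ j _ hij => ?_
        rw [inner_smul_left, inner_smul_right, horth i j hij, mul_zero, mul_zero]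
      have h2 := congrArg Complex.re h1
      rw [show (⟪T y, T y⟫_ℂ).re = ‖T y‖ ^ 2 from inner_self_eq_norm_sq (𝕜 := ℂ) (T y)] at h2
      rw [h2, Complex.re_sum]
      refine Finset.sum_congr rfl fun i _ => ?_
      rw [inner_smul_left, inner_smul_right, Complex.conj_ofReal, ← mul_assoc,
        ← Complex.ofReal_mul, Complex.re_ofReal_mul,
        show (⟪F i, F i⟫_ℂ).re = ‖F i‖ ^ 2 from inner_self_eq_norm_sq (𝕜 := ℂ) (F i)]
    have hterm : ∀ i ∈ F.support, (c * c) * ‖F i‖ ^ 2 ≤ ((i : ℝ) * (i : ℝ)) * ‖F i‖ ^ 2 := by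
      intro i _
      have hci : c < (i : ℝ) := i.2
      have h3 : c * c ≤ (i : ℝ) * (i : ℝ) := by nlinarith
      exact mul_le_mul_of_nonneg_right h3 (by positivity)
    have hsq : (c * ‖y‖) ^ 2 ≤ ‖T y‖ ^ 2 := by
      rw [hTy2]
      calc (c * ‖y‖) ^ 2 = (c * c) * ‖y‖ ^ 2 := by ring
        _ = ∑ i ∈ F.support, (c * c) * ‖F i‖ ^ 2 := by rw [hy2, Finset.mul_sum]
        _ ≤ ∑ i ∈ F.support, ((i : ℝ) * (i : ℝ)) * ‖F i‖ ^ 2 := Finset.sum_le_sum hterm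
    exact le_of_pow_le_pow_left₀ two_ne_zero (norm_nonneg _) hsq
  constructor
  · -- finite dimensionality
    set Wc := W.topologicalClosure with hWc
    have hWcnorm : ∀ y ∈ Wc, c * ‖y‖ ≤ ‖T y‖ := by
      have hsub : (Wc : Set H) ⊆ {z : H | c * ‖z‖ ≤ ‖T z‖} := by
        rw [hWc, Submodule.topologicalClosure_coe]
        exact closure_minimal (fun z hz => hWnorm z hz)
          (isClosed_le (by fun_prop) (by fun_prop))
      exact fun y hy => hsub hy
    have hK : IsCompact (closure ((T : H →ₗ[ℂ] H) '' Metric.closedBall 0 1)) := by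
      have := hTcomp.isCompact_closure_image_closedBall (𝕜₁ := ℂ) (f := (T : H →ₗ[ℂ] H)) 1
      simpa using this
    have hK0 : IsSeqCompact {z : H | z ∈ Wc ∧ ‖z‖ ≤ 1} := by
      intro z hz
      have hball : ∀ n, T (z n) ∈ closure ((T : H →ₗ[ℂ] H) '' Metric.closedBall 0 1) :=
        fun n => subset_closure
          ⟨z n, by rw [Metric.mem_closedBall, dist_zero_right]; exact (hz n).2, rfl⟩
      obtain ⟨y, _, φ, hφ, hTy⟩ := hK.tendsto_subseq hball
      have hTy' : Tendsto (fun n => T (z (φ n))) atTop (𝓝 y) := hTy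
      have hcauchy : CauchySeq fun n => z (φ n) := by
        rw [Metric.cauchySeq_iff]
        intro ε hε
        have hTc : CauchySeq fun n => T (z (φ n)) := hTy'.cauchySeq
        rw [Metric.cauchySeq_iff] at hTc
        obtain ⟨Nn, hNn⟩ := hTc (c * ε) (by positivity)
        refine ⟨Nn, fun m hm n hn => ?_⟩
        have h1 : c * ‖z (φ m) - z (φ n)‖ ≤ ‖T (z (φ m) - z (φ n))‖ :=
          hWcnorm _ (Submodule.sub_mem _ (hz (φ m)).1 (hz (φ n)).1)
        have h2 := hNn m hm n hn
        rw [dist_eq_norm] at h2 ⊢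
        rw [map_sub] at h1
        have h3 : c * ‖z (φ m) - z (φ n)‖ < c * ε := lt_of_le_of_lt h1 h2
        exact (mul_lt_mul_iff_right₀ hc).mp h3
      obtain ⟨a, ha⟩ := cauchySeq_tendsto_of_complete hcauchy
      refine ⟨a, ⟨?_, ?_⟩, φ, hφ, ha⟩
      · exact W.isClosed_topologicalClosure.mem_of_tendsto ha
          (Filter.Eventually.of_forall fun n => (hz (φ n)).1)
      · exact le_of_tendsto ha.norm (Filter.Eventually.of_forall fun n => (hz (φ n)).2)
    have hcompK0 : IsCompact {z : H | z ∈ Wc ∧ ‖z‖ ≤ 1} := hK0.isCompact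
    have himg : Subtype.val '' (Metric.closedBall (0 : ↥Wc) 1) = {z : H | z ∈ Wc ∧ ‖z‖ ≤ 1} := by
      ext z
      constructor
      · rintro ⟨⟨z, hzW⟩, hzb, rfl⟩
        refine ⟨hzW, ?_⟩
        rw [Metric.mem_closedBall, dist_zero_right] at hzb
        exact hzb
      · rintro ⟨hzW, hz1⟩
        exact ⟨⟨z, hzW⟩, by rw [Metric.mem_closedBall, dist_zero_right]; exact hz1, rfl⟩
    have hballc : IsCompact (Metric.closedBall (0 : ↥Wc) 1) := by
      rw [Topology.IsEmbedding.isCompact_iff Topology.IsEmbedding.subtypeVal, himg]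
      exact hcompK0
    have hfd : FiniteDimensional ℂ ↥Wc :=
      FiniteDimensional.of_isCompact_closedBall₀ ℂ zero_lt_one hballc
    exact Submodule.finiteDimensional_of_le W.le_topologicalClosure
  · -- the quadratic form is at most `c` on the orthogonal complement
    intro w hw
    by_contra hcon
    push_neg at hcon
    have hTW : ∀ y ∈ W, T y ∈ W := by
      intro y hy
      have hmap : Submodule.map (T : H →ₗ[ℂ] H) W ≤ W := by
        rw [hW]
        simp only [Submodule.map_iSup]
        refine iSup_le fun μ => iSup_le fun hμ => ?_
        refine le_trans ?_
          (le_iSup₂ (f := fun μ (_ : c < μ) =>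
            Module.End.eigenspace (T : H →ₗ[ℂ] H) (μ : ℂ)) μ hμ)
        rintro z ⟨z', hz', rfl⟩
        have h1 : (T : H →ₗ[ℂ] H) z' = ((μ : ℝ) : ℂ) • z' :=
          Module.End.mem_eigenspace_iff.mp hz'
        rw [h1]
        exact Submodule.smul_mem _ _ hz'
      exact hmap ⟨y, hy, rfl⟩
    have hTV : ∀ v ∈ Wᗮ, T v ∈ Wᗮ := by
      intro v hv
      rw [Submodule.mem_orthogonal] at hv ⊢
      intro y hy
      have h1 : ⟪T y, v⟫_ℂ = 0 := hv (T y) (hTW y hy)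
      have h2 : ⟪(T : H →ₗ[ℂ] H) y, v⟫_ℂ = ⟪y, (T : H →ₗ[ℂ] H) v⟫_ℂ := hsymT y v
      calc ⟪y, T v⟫_ℂ = ⟪T y, v⟫_ℂ := h2.symm
        _ = 0 := h1
    haveI : CompleteSpace ↥(Wᗮ) := (Submodule.isClosed_orthogonal W).completeSpace_coe
    set S : ↥(Wᗮ) →L[ℂ] ↥(Wᗮ) :=
      (T.comp (Wᗮ).subtypeL).codRestrict (Wᗮ) (fun v => hTV v v.2) with hS
    have hScoe : ∀ v : ↥(Wᗮ), (S v : H) = T v := fun v => rfl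
    have hSsym : ∀ x y : ↥(Wᗮ), ⟪S x, y⟫_ℂ = ⟪x, S y⟫_ℂ := by
      intro x y
      rw [Submodule.coe_inner, Submodule.coe_inner, hScoe]
      exact hsymT x y
    have hScomp : IsCompactOperator S := by
      obtain ⟨K, hKc, hKmem⟩ := hTcomp
      refine ⟨Subtype.val ⁻¹' (K ∩ (Wᗮ : Set H)), ?_, ?_⟩
      · exact (Topology.IsClosedEmbedding.subtypeVal (p := (· ∈ Wᗮ))
          (Submodule.isClosed_orthogonal W)).isCompact_preimage
          (hKc.inter_right (Submodule.isClosed_orthogonal W))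
      · have h2 : S ⁻¹' (Subtype.val ⁻¹' (K ∩ (Wᗮ : Set H)))
            = Subtype.val ⁻¹' (T ⁻¹' K) := by
          ext v
          simp only [Set.mem_preimage, Set.mem_inter_iff]
          constructor
          · rintro ⟨h3, _⟩
            exact h3
          · intro h3
            exact ⟨h3, (S v).2⟩
        rw [h2]
        exact ContinuousAt.preimage_mem_nhds continuous_subtype_val.continuousAt
          (by simpa using hKmem)
    have hu2 : c * ‖(⟨w, hw⟩ : ↥(Wᗮ))‖ ^ 2 < (⟪S ⟨w, hw⟩, (⟨w, hw⟩ : ↥(Wᗮ))⟫_ℂ).re := by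
      have h2 : ⟪S ⟨w, hw⟩, (⟨w, hw⟩ : ↥(Wᗮ))⟫_ℂ = ⟪T w, w⟫_ℂ := by
        rw [Submodule.coe_inner]
        rfl
      rw [h2]
      exact hcon
    obtain ⟨μ, hμc, v, hv0, hSv⟩ := aux_exists_eigenvector S hScomp hSsym hc hu2
    have hvH : (v : H) ∈ Module.End.eigenspace (T : H →ₗ[ℂ] H) ((μ : ℝ) : ℂ) := by
      rw [Module.End.mem_eigenspace_iff]
      have h3 := congrArg (Subtype.val) hSv
      simpa [hScoe] using h3
    have hvW : (v : H) ∈ W := by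
      have h4 : Module.End.eigenspace (T : H →ₗ[ℂ] H) ((μ : ℝ) : ℂ) ≤ W := by
        rw [hW]
        exact le_iSup₂ (f := fun μ (_ : c < μ) =>
          Module.End.eigenspace (T : H →ₗ[ℂ] H) (μ : ℂ)) μ hμc
      exact h4 hvH
    have h5 : ⟪(v : H), (v : H)⟫_ℂ = 0 :=
      (Submodule.mem_orthogonal W (v : H)).mp v.2 (v : H) hvW
    have h6 : (v : H) = 0 := inner_self_eq_zero.mp h5
    exact hv0 (Subtype.coe_injective (by simpa using h6))
end

section
/- Let X and H be complex Hilbert spaces, let T : H → H be a compact self-adjoint bounded linear operator, and let S : X → H be a bounded linear operator. Then there exists a finite-dimensional subspace V ⊆ X such that ‖Sg‖² − Re⟨T(Sg), Sg⟩ ≥ 0 for all g in the orthogonal complement V⊥ of V. -/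
open scoped InnerProductSpace

lemma key_aux {H : Type*} [NormedAddCommGroup H] [InnerProductSpace ℂ H] [CompleteSpace H]
    (T : H →L[ℂ] H) (hTcomp : IsCompactOperator T) :
    ∃ W : Submodule ℂ H, FiniteDimensional ℂ W ∧
      ∀ h ∈ Wᗮ, (⟪T h, h⟫_ℂ).re ≤ ‖h‖ ^ 2 := by
  by_contra hc
  push_neg at hc
  -- For each finset, get a unit vector orthogonal to its span with Re ⟪T h, h⟫ > 1
  have hs : ∀ s : Finset H, ∃ h : H,
      h ∈ (Submodule.span ℂ (s : Set H))ᗮ ∧ ‖h‖ = 1 ∧ 1 < (⟪T h, h⟫_ℂ).re := by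
    intro s
    obtain ⟨h, hmem, hlt⟩ := hc (Submodule.span ℂ (s : Set H)) inferInstance
    have hne : h ≠ 0 := by
      rintro rfl
      simp at hlt
    have hpos : 0 < ‖h‖ := norm_pos_iff.mpr hne
    refine ⟨(‖h‖⁻¹ : ℂ) • h, Submodule.smul_mem _ _ hmem, ?_, ?_⟩
    · simp [norm_smul, inv_mul_cancel₀ hpos.ne']
    · have : ⟪T ((‖h‖⁻¹ : ℂ) • h), (‖h‖⁻¹ : ℂ) • h⟫_ℂ
          = ((‖h‖⁻¹ : ℝ) : ℂ) * (((‖h‖⁻¹ : ℝ) : ℂ) * ⟪T h, h⟫_ℂ) := by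
        rw [map_smul, inner_smul_left, inner_smul_right]
        simp only [map_inv₀, Complex.conj_ofReal]
        push_cast
        ring
      rw [this, Complex.re_ofReal_mul, Complex.re_ofReal_mul]
      have h2 : ‖h‖ ^ 2 < (⟪T h, h⟫_ℂ).re := hlt
      rw [show (1:ℝ) = ‖h‖⁻¹ * (‖h‖⁻¹ * ‖h‖^2) by field_simp]
      have hi : (0:ℝ) < ‖h‖⁻¹ := inv_pos.mpr hpos
      exact mul_lt_mul_of_pos_left (mul_lt_mul_of_pos_left h2 hi) hi
  classical
  choose F hF1 hF2 hF3 using hs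
  -- recursively build finsets
  set g : ℕ → Finset H := fun n => Nat.rec ∅ (fun _ s => insert (F s) s) n with hg
  set e : ℕ → H := fun n => F (g n) with he
  have hgsucc : ∀ n, g (n + 1) = insert (e n) (g n) := fun n => rfl
  have hgmono : ∀ {m n}, m ≤ n → g m ⊆ g n := by
    intro m n hmn
    induction hmn with
    | refl => exact subset_rfl
    | step h ih => exact ih.trans (by rw [hgsucc]; exact Finset.subset_insert _ _)
  have hmem : ∀ {m n}, m < n → e m ∈ g n := by
    intro m n hmn
    exact hgmono hmn (by rw [hgsucc]; exact Finset.mem_insert_self _ _)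
  have horth : ∀ {m n}, m < n → ⟪e m, e n⟫_ℂ = 0 := by
    intro m n hmn
    exact (hF1 (g n)) (e m) (Submodule.subset_span (hmem hmn))
  have hON : Orthonormal ℂ e := by
    rw [orthonormal_iff_ite]
    intro i j
    rcases lt_trichotomy i j with h | h | h
    · simp [horth h, Ne.ne_or_ne, h.ne]
    · subst h
      simp [@inner_self_eq_norm_sq_to_K ℂ, hF2]
      exact Or.inl (hF2 _)
    · rw [← inner_conj_symm, horth h]
      simp [h.ne']
  -- compactness: subsequence of T (e n) converges
  obtain ⟨K, hK, hKsub⟩ := hTcomp.image_subset_compact_of_bounded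
    (Metric.isBounded_range_iff.mpr ⟨2, fun i j => by
      simp only [dist_eq_norm]
      calc ‖e i - e j‖ ≤ ‖e i‖ + ‖e j‖ := norm_sub_le _ _
        _ ≤ 2 := by rw [hF2, hF2]; norm_num⟩)
  obtain ⟨y, -, φ, hφ, hconv⟩ := hK.tendsto_subseq
    (fun n => hKsub ⟨e n, ⟨n, rfl⟩, rfl⟩ : ∀ n, T (e n) ∈ K)
  have h1 : Filter.Tendsto (fun n => ‖⟪e n, y⟫_ℂ‖) Filter.atTop (nhds 0) := by
    have h0 := hON.inner_products_summable (x := y).tendsto_atTop_zero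
    have := (Real.continuous_sqrt.tendsto 0).comp h0
    simpa [Function.comp_def, Real.sqrt_sq, norm_nonneg] using this
  have h2 : Filter.Tendsto (fun k => ‖T (e (φ k)) - y‖) Filter.atTop (nhds 0) := by
    rw [← tendsto_iff_norm_sub_tendsto_zero]
    exact hconv
  have h3 : Filter.Tendsto (fun k => (⟪T (e (φ k)), e (φ k)⟫_ℂ).re) Filter.atTop (nhds 0) := by
    refine squeeze_zero_norm (a := fun k => ‖T (e (φ k)) - y‖ + ‖⟪e (φ k), y⟫_ℂ‖) ?_ ?_
    · intro k
      have hsplit : ⟪T (e (φ k)), e (φ k)⟫_ℂ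
          = ⟪T (e (φ k)) - y, e (φ k)⟫_ℂ + ⟪y, e (φ k)⟫_ℂ := by
        rw [← inner_add_left, sub_add_cancel]
      rw [hsplit]
      calc ‖(⟪T (e (φ k)) - y, e (φ k)⟫_ℂ + ⟪y, e (φ k)⟫_ℂ).re‖
          ≤ ‖⟪T (e (φ k)) - y, e (φ k)⟫_ℂ + ⟪y, e (φ k)⟫_ℂ‖ := by
            exact Complex.abs_re_le_norm _
        _ ≤ ‖⟪T (e (φ k)) - y, e (φ k)⟫_ℂ‖ + ‖⟪y, e (φ k)⟫_ℂ‖ := norm_add_le _ _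
        _ ≤ ‖T (e (φ k)) - y‖ * ‖e (φ k)‖ + ‖⟪e (φ k), y⟫_ℂ‖ := by
            rw [norm_inner_symm y]
            exact add_le_add_left (norm_inner_le_norm _ _) _
        _ = ‖T (e (φ k)) - y‖ + ‖⟪e (φ k), y⟫_ℂ‖ := by rw [hF2]; ring
    · simpa using h2.add (h1.comp hφ.tendsto_atTop)
  have hge : (1:ℝ) ≤ 0 := ge_of_tendsto' h3 (fun k => (hF3 (g (φ k))).le)
  linarith

theorem statement3 {X H : Type*} [NormedAddCommGroup X] [InnerProductSpace ℂ X]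
    [CompleteSpace X] [NormedAddCommGroup H] [InnerProductSpace ℂ H] [CompleteSpace H]
    (T : H →L[ℂ] H) (hTcomp : IsCompactOperator T) (hTsa : IsSelfAdjoint T)
    (S : X →L[ℂ] H) :
    ∃ V : Submodule ℂ X, FiniteDimensional ℂ V ∧
      ∀ g ∈ Vᗮ, 0 ≤ ‖S g‖ ^ 2 - (⟪T (S g), S g⟫_ℂ).re := by
  obtain ⟨W, hWfd, hW⟩ := key_aux T hTcomp
  refine ⟨W.map (ContinuousLinearMap.adjoint S).toLinearMap, Module.Finite.map _ _, ?_⟩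
  intro g hg
  have hSg : S g ∈ Wᗮ := by
    rw [Submodule.mem_orthogonal]
    intro w hw
    have := (Submodule.mem_orthogonal _ _).mp hg (ContinuousLinearMap.adjoint S w)
      (Submodule.mem_map_of_mem hw)
    rwa [ContinuousLinearMap.adjoint_inner_left] at this
  linarith [hW (S g) hSg]
end

section
/- Let X, Y and Z be complex Hilbert spaces, and let A : X → Y and B : X → Z be bounded linear operators. Then there exists a constant C > 0 such that ‖Ax‖ ≤ C‖Bx‖ for all x ∈ X if and only if the range of A* is contained in the range of B*. -/
open ContinuousLinearMap InnerProductSpace Filter Topology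

set_option maxHeartbeats 2000000 in
theorem statement4 {X Y Z : Type*}
    [NormedAddCommGroup X] [InnerProductSpace ℂ X] [CompleteSpace X]
    [NormedAddCommGroup Y] [InnerProductSpace ℂ Y] [CompleteSpace Y]
    [NormedAddCommGroup Z] [InnerProductSpace ℂ Z] [CompleteSpace Z]
    (A : X →L[ℂ] Y) (B : X →L[ℂ] Z) :
    (∃ C : ℝ, 0 < C ∧ ∀ x : X, ‖A x‖ ≤ C * ‖B x‖) ↔
      LinearMap.range (ContinuousLinearMap.adjoint A : Y →ₗ[ℂ] X) ≤
        LinearMap.range (ContinuousLinearMap.adjoint B : Z →ₗ[ℂ] X) := by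
  constructor
  · rintro ⟨C, hC, hAB⟩ w ⟨y, rfl⟩
    -- the functional x ↦ ⟪y, A x⟫
    set ψ : X →L[ℂ] ℂ := (innerSL ℂ y).comp A with hψ
    have hker : LinearMap.ker (B : X →ₗ[ℂ] Z) ≤ LinearMap.ker (ψ : X →ₗ[ℂ] ℂ) := by
      intro x hx
      have hx' : B x = 0 := hx
      have h0 : ‖A x‖ ≤ C * ‖B x‖ := hAB x
      rw [hx', norm_zero, mul_zero] at h0
      have hA0 : A x = 0 := norm_le_zero_iff.mp h0
      simp [LinearMap.mem_ker, hψ, hA0]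
    set p : Submodule ℂ Z := LinearMap.range (B : X →ₗ[ℂ] Z) with hp
    set φ₀ : p →ₗ[ℂ] ℂ :=
      ((LinearMap.ker (B : X →ₗ[ℂ] Z)).liftQ (ψ : X →ₗ[ℂ] ℂ) hker).comp
        ((B : X →ₗ[ℂ] Z).quotKerEquivRange.symm : p →ₗ[ℂ] _) with hφ₀
    have hφ₀x : ∀ (w : p) (x : X), (w : Z) = B x → φ₀ w = ψ x := by
      rintro ⟨z, hz⟩ x hx
      subst hx
      have h1 : (B : X →ₗ[ℂ] Z).quotKerEquivRange.symm ⟨B x, hz⟩ =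
          (LinearMap.ker (B : X →ₗ[ℂ] Z)).mkQ x :=
        (B : X →ₗ[ℂ] Z).quotKerEquivRange_symm_apply_image x hz
      simp only [hφ₀, LinearMap.coe_comp, LinearEquiv.coe_coe, Function.comp_apply]
      rw [h1]
      rfl
    have hbound : ∀ w : p, ‖φ₀ w‖ ≤ (C * ‖y‖) * ‖w‖ := by
      rintro ⟨z, x, rfl⟩
      rw [hφ₀x ⟨(B : X →ₗ[ℂ] Z) x, ⟨x, rfl⟩⟩ x rfl]
      have h1 : ‖ψ x‖ ≤ ‖y‖ * ‖A x‖ := by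
        simpa [hψ] using norm_inner_le_norm (𝕜 := ℂ) y (A x)
      have h2 : ‖A x‖ ≤ C * ‖B x‖ := hAB x
      have h3 : ‖(⟨(B : X →ₗ[ℂ] Z) x, ⟨x, rfl⟩⟩ : p)‖ = ‖B x‖ := rfl
      rw [h3]
      nlinarith [norm_nonneg y, norm_nonneg (A x), norm_nonneg (B x)]
    set φ : p →L[ℂ] ℂ := LinearMap.mkContinuous φ₀ (C * ‖y‖) hbound with hφ
    obtain ⟨g, hg, -⟩ := exists_extension_norm_eq p φ
    refine ⟨(toDual ℂ Z).symm g, ?_⟩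
    apply ext_inner_right ℂ
    intro x
    rw [ContinuousLinearMap.coe_coe, ContinuousLinearMap.coe_coe, adjoint_inner_left, adjoint_inner_left]
    have hmem : B x ∈ p := ⟨x, rfl⟩
    have h1 : ⟪(toDual ℂ Z).symm g, B x⟫_ℂ = g (B x) := toDual_symm_apply
    have h2 : g (B x) = φ (⟨B x, hmem⟩ : p) := hg ⟨B x, hmem⟩
    have h3 : φ (⟨B x, hmem⟩ : p) = ψ x := hφ₀x ⟨B x, hmem⟩ x rfl
    rw [h1, h2, h3]
    simp [hψ]
  · intro h
    set N : Submodule ℂ Z := LinearMap.ker (ContinuousLinearMap.adjoint B : Z →ₗ[ℂ] X) with hN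
    have hNclosed : IsClosed (N : Set Z) :=
      ContinuousLinearMap.isClosed_ker (ContinuousLinearMap.adjoint B)
    haveI : CompleteSpace N := hNclosed.completeSpace_coe
    have ex : ∀ y : Y, ∃ z : Z, z ∈ Nᗮ ∧
        ContinuousLinearMap.adjoint B z = ContinuousLinearMap.adjoint A y := by
      intro y
      obtain ⟨z, hz⟩ := h (LinearMap.mem_range_self _ y)
      refine ⟨(Submodule.orthogonalProjection Nᗮ z : Z), Submodule.coe_mem _, ?_⟩
      have hmem : z - (Submodule.orthogonalProjection Nᗮ z : Z) ∈ N := by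
        have h1 := Submodule.sub_starProjection_mem_orthogonal (K := Nᗮ) z
        rwa [Submodule.orthogonal_orthogonal] at h1
      have h0 : ContinuousLinearMap.adjoint B (z - (Submodule.orthogonalProjection Nᗮ z : Z)) = 0 := hmem
      rw [map_sub, sub_eq_zero] at h0
      rw [← h0]; exact hz
    have uniq : ∀ z₁ z₂ : Z, z₁ ∈ Nᗮ → z₂ ∈ Nᗮ →
        ContinuousLinearMap.adjoint B z₁ = ContinuousLinearMap.adjoint B z₂ → z₁ = z₂ := by
      intro z₁ z₂ h₁ h₂ he
      have hsub : z₁ - z₂ ∈ N := by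
        have : ContinuousLinearMap.adjoint B (z₁ - z₂) = 0 := by rw [map_sub, he, sub_self]
        exact this
      have hsub' : z₁ - z₂ ∈ Nᗮ := Submodule.sub_mem _ h₁ h₂
      have h0 : z₁ - z₂ = 0 := by
        have hd := Submodule.orthogonal_disjoint N
        exact (Submodule.mem_bot ℂ).mp (hd.le_bot ⟨hsub, hsub'⟩)
      exact sub_eq_zero.mp h0
    choose f hfm hfB using ex
    have Lmap_add : ∀ y₁ y₂, f (y₁ + y₂) = f y₁ + f y₂ := by
      intro y₁ y₂
      refine uniq _ _ (hfm _) (Submodule.add_mem _ (hfm y₁) (hfm y₂)) ?_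
      rw [map_add, hfB, hfB, hfB, map_add]
    have Lmap_smul : ∀ (c : ℂ) y, f (c • y) = c • f y := by
      intro c y
      refine uniq _ _ (hfm _) (Submodule.smul_mem _ c (hfm y)) ?_
      rw [map_smul, hfB, hfB, map_smul]
    set L : Y →ₗ[ℂ] Z :=
      { toFun := f
        map_add' := Lmap_add
        map_smul' := Lmap_smul } with hLdef
    have hLf : ∀ y, L y = f y := fun y => rfl
    have hc : Continuous L := by
      apply L.continuous_of_seq_closed_graph
      intro u x y hu hLu
      have hLu' : Tendsto (fun n => f (u n)) atTop (𝓝 y) := hLu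
      have hyo : y ∈ Nᗮ :=
        (Submodule.isClosed_orthogonal N).mem_of_tendsto hLu'
          (Eventually.of_forall fun n => hfm (u n))
      have key : y = f x := by
        refine uniq y (f x) hyo (hfm x) ?_
        have h1 : Tendsto (fun n => ContinuousLinearMap.adjoint B (f (u n))) atTop
            (𝓝 (ContinuousLinearMap.adjoint B y)) :=
          ((ContinuousLinearMap.adjoint B).continuous.tendsto y).comp hLu'
        have h2 : (fun n => ContinuousLinearMap.adjoint B (f (u n))) =
            fun n => ContinuousLinearMap.adjoint A (u n) := by
          funext n; exact hfB (u n)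
        rw [h2] at h1
        have h3 : Tendsto (fun n => ContinuousLinearMap.adjoint A (u n)) atTop
            (𝓝 (ContinuousLinearMap.adjoint A x)) :=
          ((ContinuousLinearMap.adjoint A).continuous.tendsto x).comp hu
        rw [hfB x]
        exact tendsto_nhds_unique h1 h3
      rw [hLf x, ← key]
    set L' : Y →L[ℂ] Z := { toLinearMap := L, cont := hc } with hL'
    have hBL : (ContinuousLinearMap.adjoint B).comp L' = ContinuousLinearMap.adjoint A := by
      ext y
      exact hfB y
    have hA : A = (ContinuousLinearMap.adjoint L').comp B := by
      conv_lhs => rw [← ContinuousLinearMap.adjoint_adjoint A, ← hBL]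
      rw [ContinuousLinearMap.adjoint_comp, ContinuousLinearMap.adjoint_adjoint]
    refine ⟨‖ContinuousLinearMap.adjoint L'‖ + 1, by positivity, fun x => ?_⟩
    have h1 : ‖A x‖ = ‖ContinuousLinearMap.adjoint L' (B x)‖ := by rw [hA]; rfl
    rw [h1]
    have h2 := (ContinuousLinearMap.adjoint L').le_opNorm (B x)
    nlinarith [norm_nonneg (B x), norm_nonneg (ContinuousLinearMap.adjoint L')]
end

section
/- Let X, Y and Z be complex Hilbert spaces, let A : X → Y and B : X → Z be bounded linear operators, and let V ⊆ X be a finite-dimensional subspace. If the range of A* is not contained in (range of B*) + V, then there exists a sequence (g_m)_{m∈ℕ} in the orthogonal complement V⊥ of V such that ‖A g_m‖ → ∞ and ‖B g_m‖ → 0 as m → ∞. -/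
open Filter ContinuousLinearMap

local notation "⟪" x ", " y "⟫" => @inner ℂ _ _ x y

theorem aux_douglas {X Z : Type*}
    [NormedAddCommGroup X] [InnerProductSpace ℂ X] [CompleteSpace X]
    [NormedAddCommGroup Z] [InnerProductSpace ℂ Z] [CompleteSpace Z]
    (B : X →L[ℂ] Z) (V : Submodule ℂ X) [CompleteSpace V] (f : X) (c : ℝ)
    (hb : ∀ x : X, ‖⟪f, x⟫‖ ≤ c * max ‖B x‖ ‖(V.subtypeL.comp (V.orthogonalProjectionOnto)) x‖) :
    f ∈ LinearMap.range (ContinuousLinearMap.adjoint B : Z →ₗ[ℂ] X) ⊔ V := by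
  set P : X →L[ℂ] X := V.subtypeL.comp (V.orthogonalProjectionOnto) with hP
  set E : X →L[ℂ] Z × X := B.prod P with hE
  have hnorm : ∀ x : X, ‖E x‖ = max ‖B x‖ ‖P x‖ := fun x => rfl
  set L : X →ₗ[ℂ] ℂ := (innerSL ℂ f).toLinearMap with hL
  set EL : X →ₗ[ℂ] Z × X := (E : X →ₗ[ℂ] Z × X) with hEL
  have hker : LinearMap.ker EL ≤ LinearMap.ker L := by
    intro x hx
    have hx' : E x = 0 := hx
    have h1 := hb x
    have h2 : max ‖B x‖ ‖P x‖ = 0 := by rw [← hnorm, hx', norm_zero]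
    rw [h2, mul_zero] at h1
    have : ‖⟪f, x⟫‖ = 0 := le_antisymm h1 (norm_nonneg _)
    simpa [hL] using norm_eq_zero.mp this
  -- functional on the range of E
  set M : Submodule ℂ (Z × X) := LinearMap.range EL with hM
  set φ₀ : M →ₗ[ℂ] ℂ := (LinearMap.ker EL).liftQ L hker ∘ₗ
      (EL.quotKerEquivRange.symm : M →ₗ[ℂ] X ⧸ LinearMap.ker EL) with hφ₀
  have hφ₀app : ∀ x : X, φ₀ ⟨E x, LinearMap.mem_range_self EL x⟩ = ⟪f, x⟫ := by
    intro x
    have h1 : EL.quotKerEquivRange.symm ⟨EL x, LinearMap.mem_range_self EL x⟩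
        = (LinearMap.ker EL).mkQ x := EL.quotKerEquivRange_symm_apply_image x _
    have : (⟨E x, LinearMap.mem_range_self EL x⟩ : M) = ⟨EL x, LinearMap.mem_range_self EL x⟩ := rfl
    rw [hφ₀]
    simp only [LinearMap.comp_apply, this, LinearEquiv.coe_coe, h1]
    rfl
  have hbound : ∀ m : M, ‖φ₀ m‖ ≤ (max c 0) * ‖(m : Z × X)‖ := by
    rintro ⟨w, hw⟩
    obtain ⟨x, hx⟩ := hw
    have hx' : E x = w := hx
    have : (⟨w, ⟨x, hx⟩⟩ : M) = ⟨E x, LinearMap.mem_range_self EL x⟩ := by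
      simp [hx']
    rw [this, hφ₀app]
    calc ‖⟪f, x⟫‖ ≤ c * max ‖B x‖ ‖P x‖ := hb x
      _ ≤ (max c 0) * max ‖B x‖ ‖P x‖ := by
          apply mul_le_mul_of_nonneg_right (le_max_left _ _)
          positivity
      _ = (max c 0) * ‖E x‖ := by rw [hnorm]
  set φ : M →L[ℂ] ℂ := φ₀.mkContinuous (max c 0) hbound with hφ
  obtain ⟨ψ, hψ, -⟩ := exists_extension_norm_eq M φ
  set w := (InnerProductSpace.toDual ℂ Z).symm (ψ.comp (ContinuousLinearMap.inl ℂ Z X)) with hw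
  set u := (InnerProductSpace.toDual ℂ X).symm (ψ.comp (ContinuousLinearMap.inr ℂ Z X)) with hu
  have key : ∀ x : X, ⟪f, x⟫ = ⟪ContinuousLinearMap.adjoint B w + P u, x⟫ := by
    intro x
    have h1 : ⟪f, x⟫ = ψ (E x) := by
      have := hψ ⟨E x, LinearMap.mem_range_self EL x⟩
      rw [this, hφ]
      exact (hφ₀app x).symm
    have h2 : E x = (B x, 0) + (0, P x) := by simp [hE]
    have h3 : ψ (E x) = ψ (B x, 0) + ψ (0, P x) := by rw [h2, map_add]
    have h4 : ⟪w, B x⟫ = ψ (B x, 0) := InnerProductSpace.toDual_symm_apply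
    have h5 : ⟪u, P x⟫ = ψ (0, P x) := InnerProductSpace.toDual_symm_apply
    have h6 : ⟪u, P x⟫ = ⟪P u, x⟫ :=
      (Submodule.inner_starProjection_left_eq_right V u x).symm
    rw [h1, h3, ← h4, ← h5, inner_add_left, ContinuousLinearMap.adjoint_inner_left, h6]
  have hfe : f = ContinuousLinearMap.adjoint B w + P u := by
    apply ext_inner_right ℂ
    intro x
    exact key x
  rw [hfe]
  exact Submodule.add_mem_sup (LinearMap.mem_range_self _ w) (by simp [hP])



theorem statement6 {X Y Z : Type*}
    [NormedAddCommGroup X] [InnerProductSpace ℂ X] [CompleteSpace X]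
    [NormedAddCommGroup Y] [InnerProductSpace ℂ Y] [CompleteSpace Y]
    [NormedAddCommGroup Z] [InnerProductSpace ℂ Z] [CompleteSpace Z]
    (A : X →L[ℂ] Y) (B : X →L[ℂ] Z) (V : Submodule ℂ X) [FiniteDimensional ℂ V]
    (h : ¬ LinearMap.range (ContinuousLinearMap.adjoint A : Y →ₗ[ℂ] X) ≤
          LinearMap.range (ContinuousLinearMap.adjoint B : Z →ₗ[ℂ] X) ⊔ V) :
    ∃ g : ℕ → X, (∀ m, g m ∈ Vᗮ) ∧
      Tendsto (fun m => ‖A (g m)‖) atTop atTop ∧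
      Tendsto (fun m => ‖B (g m)‖) atTop (nhds 0) := by
  obtain ⟨f, hf, hfn⟩ := SetLike.not_le_iff_exists.mp h
  obtain ⟨y, hy⟩ := hf
  clear h
  set P : X →L[ℂ] X := V.subtypeL.comp (V.orthogonalProjectionOnto) with hP
  have hf0 : f ≠ 0 := by rintro rfl; exact hfn (zero_mem _)
  have hy0 : y ≠ 0 := by rintro rfl; exact hf0 (by simpa using hy.symm)
  have hyn : (0:ℝ) < ‖y‖ := norm_pos_iff.mpr hy0
  have key : ∀ m : ℕ, ∃ x : X, ((m:ℝ)+1)^2 * max ‖B x‖ ‖P x‖ < ‖⟪f, x⟫‖ := by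
    intro m
    by_contra hc
    push_neg at hc
    exact hfn (aux_douglas B V f _ hc)
  choose x hx using key
  have hin_pos : ∀ m, (0:ℝ) < ‖⟪f, x m⟫‖ := fun m =>
    lt_of_le_of_lt (by positivity) (hx m)
  have hfx0 : ∀ m, ⟪f, x m⟫ ≠ 0 := fun m => by
    intro h0; simpa [h0] using hin_pos m
  have hnm : ∀ m : ℕ, ‖((m:ℂ)+1)‖ = (m:ℝ)+1 := by
    intro m
    rw [show ((m:ℂ)+1) = (((m+1:ℕ)):ℂ) by push_cast; ring, Complex.norm_natCast]
    push_cast; ring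
  set c : ℕ → ℂ := fun m => (((m:ℂ)+1)) / ⟪f, x m⟫ with hc
  set s : ℕ → X := fun m => c m • x m with hs
  have hnc : ∀ m, ‖c m‖ = ((m:ℝ)+1) / ‖⟪f, x m⟫‖ := by
    intro m
    rw [hc]
    simp only [norm_div]
    congr 1
    exact hnm m
  -- smallness of components of s m
  have hsmall : ∀ m, ∀ t : ℝ, 0 ≤ t → t ≤ max ‖B (x m)‖ ‖P (x m)‖ →
      ((m:ℝ)+1) / ‖⟪f, x m⟫‖ * t ≤ 1/((m:ℝ)+1) := by
    intro m t ht htm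
    rw [div_mul_eq_mul_div, div_le_div_iff₀ (hin_pos m) (by positivity)]
    have h1 : ((m:ℝ)+1)^2 * t ≤ ((m:ℝ)+1)^2 * max ‖B (x m)‖ ‖P (x m)‖ :=
      mul_le_mul_of_nonneg_left htm (by positivity)
    nlinarith [hx m]
  have hBs : ∀ m, ‖B (s m)‖ ≤ 1/((m:ℝ)+1) := by
    intro m
    rw [hs]
    simp only [map_smul, norm_smul, hnc]
    exact hsmall m _ (norm_nonneg _) (le_max_left _ _)
  have hPs : ∀ m, ‖P (s m)‖ ≤ 1/((m:ℝ)+1) := by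
    intro m
    rw [hs]
    simp only [map_smul, norm_smul, hnc]
    exact hsmall m _ (norm_nonneg _) (le_max_right _ _)
  have hfs : ∀ m, ⟪f, s m⟫ = ((m:ℂ)+1) := by
    intro m
    rw [hs]
    simp only [inner_smul_right, hc]
    exact div_mul_cancel₀ _ (hfx0 m)
  refine ⟨fun m => s m - P (s m), ?_, ?_, ?_⟩
  · intro m
    exact Submodule.sub_starProjection_mem_orthogonal (K := V) (s m)
  · -- ‖A (g m)‖ → ∞
    have hlow : ∀ m : ℕ, ((m:ℝ) + (1 - ‖f‖)) / ‖y‖ ≤ ‖A (s m - P (s m))‖ := by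
      intro m
      have h1 : ⟪f, s m - P (s m)⟫ = ((m:ℂ)+1) - ⟪f, P (s m)⟫ := by
        rw [inner_sub_right, hfs]
      have h2 : ‖⟪f, P (s m)⟫‖ ≤ ‖f‖ := by
        calc ‖⟪f, P (s m)⟫‖ ≤ ‖f‖ * ‖P (s m)‖ := norm_inner_le_norm _ _
          _ ≤ ‖f‖ * (1/((m:ℝ)+1)) := mul_le_mul_of_nonneg_left (hPs m) (norm_nonneg _)
          _ ≤ ‖f‖ * 1 := by
              apply mul_le_mul_of_nonneg_left _ (norm_nonneg _)
              rw [div_le_one (by positivity)]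
              linarith [Nat.cast_nonneg (α := ℝ) m]
          _ = ‖f‖ := mul_one _
      have h3 : ((m:ℝ)+1) - ‖f‖ ≤ ‖⟪f, s m - P (s m)⟫‖ := by
        rw [h1]
        calc ((m:ℝ)+1) - ‖f‖ ≤ ‖((m:ℂ)+1)‖ - ‖⟪f, P (s m)⟫‖ := by
              rw [hnm m]; linarith [h2]
          _ ≤ ‖((m:ℂ)+1) - ⟪f, P (s m)⟫‖ := norm_sub_norm_le _ _
      have h4 : ‖⟪f, s m - P (s m)⟫‖ ≤ ‖y‖ * ‖A (s m - P (s m))‖ := by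
        rw [← hy, ContinuousLinearMap.coe_coe, ContinuousLinearMap.adjoint_inner_left]
        exact norm_inner_le_norm _ _
      rw [div_le_iff₀ hyn]
      calc (m:ℝ) + (1 - ‖f‖) = ((m:ℝ)+1) - ‖f‖ := by ring
        _ ≤ ‖⟪f, s m - P (s m)⟫‖ := h3
        _ ≤ ‖y‖ * ‖A (s m - P (s m))‖ := h4
        _ = ‖A (s m - P (s m))‖ * ‖y‖ := mul_comm _ _
    apply tendsto_atTop_mono hlow
    exact (tendsto_atTop_add_const_right atTop (1 - ‖f‖)
      tendsto_natCast_atTop_atTop).atTop_div_const hyn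
  · -- ‖B (g m)‖ → 0
    have hup : ∀ m : ℕ, ‖B (s m - P (s m))‖ ≤ (1 + ‖B‖) * (1/((m:ℝ)+1)) := by
      intro m
      calc ‖B (s m - P (s m))‖ = ‖B (s m) - B (P (s m))‖ := by rw [map_sub]
        _ ≤ ‖B (s m)‖ + ‖B (P (s m))‖ := norm_sub_le _ _
        _ ≤ 1/((m:ℝ)+1) + ‖B‖ * ‖P (s m)‖ := add_le_add (hBs m) (B.le_opNorm _)
        _ ≤ 1/((m:ℝ)+1) + ‖B‖ * (1/((m:ℝ)+1)) :=
            add_le_add_right (mul_le_mul_of_nonneg_left (hPs m) (norm_nonneg _)) _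
        _ = (1 + ‖B‖) * (1/((m:ℝ)+1)) := by ring
    apply squeeze_zero (fun m => norm_nonneg _) hup
    simpa using tendsto_one_div_add_atTop_nhds_zero_nat.const_mul (1 + ‖B‖)
end

section
/- Let d ∈ {2,3}, k > 0, and let B ⊆ ℝ^d be a nonempty open set. If g ∈ L²(S^{d-1}) and the Herglotz wave function u^i_g vanishes at every point of B, then g = 0. -/
open MeasureTheory Metric Filter
open scoped RealInnerProductSpace

noncomputable section

/-- The surface measure (Hausdorff measure of dimension `d-1`) on the unit sphere
`S^{d-1} ⊆ ℝ^d`, as a measure on `ℝ^d` supported on the sphere. -/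
def sphereMeasure (d : ℕ) : Measure (EuclideanSpace ℝ (Fin d)) :=
  (μH[(d : ℝ) - 1]).restrict (sphere (0 : EuclideanSpace ℝ (Fin d)) 1)

/-- The Herglotz wave function with density `g`:
`u^i_g(x) = ∫_{S^{d-1}} e^{i k x·θ} g(θ) ds(θ)`. -/
def herglotz (d : ℕ) (k : ℝ) (g : EuclideanSpace ℝ (Fin d) → ℂ)
    (x : EuclideanSpace ℝ (Fin d)) : ℂ :=
  ∫ θ, Complex.exp (Complex.I * k * (⟪x, θ⟫ : ℝ)) * g θ ∂(sphereMeasure d)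

/-- The Laplacian of a complex-valued function on `ℝ^d`: the sum of the second partial
derivatives with respect to the standard coordinate directions. -/
def lap (d : ℕ) (u : EuclideanSpace ℝ (Fin d) → ℂ) (x : EuclideanSpace ℝ (Fin d)) : ℂ :=
  ∑ i : Fin d,
    fderiv ℝ (fun y => fderiv ℝ u y (EuclideanSpace.single i 1)) x (EuclideanSpace.single i 1)

open scoped NNReal ENNReal
open Real

namespace St8

lemma lipsin : LipschitzWith 1 Real.sin := by
  apply lipschitzWith_of_nnnorm_deriv_le Real.differentiable_sin
  intro x
  rw [Real.deriv_sin, ← NNReal.coe_le_coe, coe_nnnorm, Real.norm_eq_abs]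
  exact Real.abs_cos_le_one x

lemma lipcos : LipschitzWith 1 Real.cos := by
  apply lipschitzWith_of_nnnorm_deriv_le Real.differentiable_cos
  intro x
  rw [Real.deriv_cos, ← NNReal.coe_le_coe, coe_nnnorm, Real.norm_eq_abs, abs_neg]
  exact Real.abs_sin_le_one x

lemma exists_angle {a b : ℝ} (h : a^2 + b^2 = 1) :
    ∃ t ∈ Set.Icc (0:ℝ) (2*π), Real.cos t = a ∧ Real.sin t = b := by
  have ha1 : -1 ≤ a := by nlinarith
  have ha2 : a ≤ 1 := by nlinarith
  rcases le_or_gt 0 b with hb | hb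
  · refine ⟨Real.arccos a, ⟨Real.arccos_nonneg a, ?_⟩, Real.cos_arccos ha1 ha2, ?_⟩
    · linarith [Real.arccos_le_pi a, Real.pi_pos]
    · rw [Real.sin_arccos, show (1:ℝ) - a^2 = b^2 by linarith, Real.sqrt_sq hb]
  · refine ⟨2*π - Real.arccos a, ⟨?_, ?_⟩, ?_, ?_⟩
    · linarith [Real.arccos_le_pi a, Real.pi_pos]
    · linarith [Real.arccos_nonneg a]
    · rw [Real.cos_two_pi_sub, Real.cos_arccos ha1 ha2]
    · rw [Real.sin_two_pi_sub, Real.sin_arccos, show (1:ℝ) - a^2 = b^2 by linarith,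
        Real.sqrt_sq_eq_abs, abs_of_neg hb]
      ring

def circ (t : ℝ) : EuclideanSpace ℝ (Fin 2) :=
  (WithLp.equiv 2 _).symm ![Real.cos t, Real.sin t]

@[simp] lemma circ_zero (t : ℝ) : circ t 0 = Real.cos t := rfl
@[simp] lemma circ_one (t : ℝ) : circ t 1 = Real.sin t := rfl

lemma circ_lip : LipschitzWith 2 circ := by
  apply LipschitzWith.of_dist_le_mul
  intro s t
  rw [EuclideanSpace.dist_eq, Fin.sum_univ_two]
  have h1 : dist (circ s 0) (circ t 0) ≤ dist s t := by simpa using lipcos.dist_le_mul s t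
  have h2 : dist (circ s 1) (circ t 1) ≤ dist s t := by simpa using lipsin.dist_le_mul s t
  have h3 : (0:ℝ) ≤ dist s t := dist_nonneg
  rw [show ((2:ℝ≥0):ℝ) * dist s t = Real.sqrt ((2*dist s t)^2) by
    rw [Real.sqrt_sq (by positivity)]; norm_num]
  apply Real.sqrt_le_sqrt
  nlinarith [dist_nonneg (x := circ s 0) (y := circ t 0), dist_nonneg (x := circ s 1) (y := circ t 1)]

lemma sum_sq_of_sphere2 {θ : EuclideanSpace ℝ (Fin 2)} (hθ : θ ∈ sphere (0:EuclideanSpace ℝ (Fin 2)) 1) :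
    θ 0 ^ 2 + θ 1 ^ 2 = 1 := by
  have hnorm : ‖θ‖ = 1 := by simpa using hθ
  have := EuclideanSpace.norm_eq θ
  rw [hnorm, Fin.sum_univ_two, Real.norm_eq_abs, Real.norm_eq_abs, sq_abs, sq_abs] at this
  have h0 : (0:ℝ) ≤ θ 0 ^2 + θ 1 ^2 := by positivity
  nlinarith [Real.sq_sqrt h0]

lemma circ_cover : sphere (0 : EuclideanSpace ℝ (Fin 2)) 1 ⊆ circ '' Set.Icc 0 (2*π) := by
  intro θ hθ
  obtain ⟨t, ht, hc, hs⟩ := exists_angle (sum_sq_of_sphere2 hθ)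
  refine ⟨t, ht, PiLp.ext fun j => ?_⟩
  fin_cases j
  · simpa using hc
  · simpa using hs

lemma finite2 : μH[(1:ℝ)] (sphere (0 : EuclideanSpace ℝ (Fin 2)) 1) < ⊤ := by
  apply lt_of_le_of_lt (measure_mono circ_cover)
  apply lt_of_le_of_lt (circ_lip.hausdorffMeasure_image_le zero_le_one _)
  rw [hausdorffMeasure_real, Real.volume_Icc]
  exact ENNReal.mul_lt_top (by simp) (by simp; exact ENNReal.mul_lt_top (by norm_num) ENNReal.ofReal_lt_top)



lemma aux_mul {a a' b b' : ℝ} (hb : |b| ≤ 1) (ha' : |a'| ≤ 1) :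
    |a*b - a'*b'| ≤ |a - a'| + |b - b'| := by
  have h : a*b - a'*b' = (a - a')*b + a'*(b - b') := by ring
  rw [h]
  refine (abs_add_le _ _).trans ?_
  rw [abs_mul, abs_mul]
  nlinarith [abs_nonneg (a - a'), abs_nonneg (b - b')]

def sph (p : ℝ × ℝ) : EuclideanSpace ℝ (Fin 3) :=
  (WithLp.equiv 2 _).symm ![Real.sin p.1 * Real.cos p.2, Real.sin p.1 * Real.sin p.2, Real.cos p.1]

@[simp] lemma sph_zero (p : ℝ × ℝ) : sph p 0 = Real.sin p.1 * Real.cos p.2 := rfl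
@[simp] lemma sph_one (p : ℝ × ℝ) : sph p 1 = Real.sin p.1 * Real.sin p.2 := rfl
@[simp] lemma sph_two (p : ℝ × ℝ) : sph p 2 = Real.cos p.1 := rfl

lemma sph_lip : LipschitzWith 4 sph := by
  apply LipschitzWith.of_dist_le_mul
  intro p q
  rw [EuclideanSpace.dist_eq, Fin.sum_univ_three]
  have hd1 : |p.1 - q.1| ≤ dist p q := by
    rw [Prod.dist_eq, ← Real.dist_eq]; exact le_max_left _ _
  have hd2 : |p.2 - q.2| ≤ dist p q := by
    rw [Prod.dist_eq, ← Real.dist_eq]; exact le_max_right _ _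
  have hs1 : |Real.sin p.1 - Real.sin q.1| ≤ |p.1 - q.1| := by
    simpa [Real.dist_eq] using lipsin.dist_le_mul p.1 q.1
  have hc1 : |Real.cos p.1 - Real.cos q.1| ≤ |p.1 - q.1| := by
    simpa [Real.dist_eq] using lipcos.dist_le_mul p.1 q.1
  have hs2 : |Real.sin p.2 - Real.sin q.2| ≤ |p.2 - q.2| := by
    simpa [Real.dist_eq] using lipsin.dist_le_mul p.2 q.2
  have hc2 : |Real.cos p.2 - Real.cos q.2| ≤ |p.2 - q.2| := by
    simpa [Real.dist_eq] using lipcos.dist_le_mul p.2 q.2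
  have e0 : |sph p 0 - sph q 0| ≤ 2 * dist p q := by
    have := aux_mul (a := Real.sin p.1) (a' := Real.sin q.1) (b := Real.cos p.2) (b' := Real.cos q.2)
      (Real.abs_cos_le_one p.2) (Real.abs_sin_le_one q.1)
    simp only [sph_zero]
    linarith [this.trans (add_le_add (hs1.trans hd1) (hc2.trans hd2))]
  have e1 : |sph p 1 - sph q 1| ≤ 2 * dist p q := by
    have := aux_mul (a := Real.sin p.1) (a' := Real.sin q.1) (b := Real.sin p.2) (b' := Real.sin q.2)
      (Real.abs_sin_le_one p.2) (Real.abs_sin_le_one q.1)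
    simp only [sph_one]
    linarith [this.trans (add_le_add (hs1.trans hd1) (hs2.trans hd2))]
  have e2 : |sph p 2 - sph q 2| ≤ 2 * dist p q := by
    simp only [sph_two]
    linarith [hc1.trans hd1, dist_nonneg (x:=p) (y:=q)]
  have h3 : (0:ℝ) ≤ dist p q := dist_nonneg
  rw [show ((4:ℝ≥0):ℝ) * dist p q = Real.sqrt ((4*dist p q)^2) by
    rw [Real.sqrt_sq (by positivity)]; norm_num]
  apply Real.sqrt_le_sqrt
  have r0 : dist (sph p 0) (sph q 0) = |sph p 0 - sph q 0| := Real.dist_eq _ _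
  have r1 : dist (sph p 1) (sph q 1) = |sph p 1 - sph q 1| := Real.dist_eq _ _
  have r2 : dist (sph p 2) (sph q 2) = |sph p 2 - sph q 2| := Real.dist_eq _ _
  rw [r0, r1, r2]
  nlinarith [abs_nonneg (sph p 0 - sph q 0), abs_nonneg (sph p 1 - sph q 1),
    abs_nonneg (sph p 2 - sph q 2), sq_abs (sph p 0 - sph q 0), sq_abs (sph p 1 - sph q 1),
    sq_abs (sph p 2 - sph q 2)]

lemma sum_sq_of_sphere3 {θ : EuclideanSpace ℝ (Fin 3)}
    (hθ : θ ∈ sphere (0:EuclideanSpace ℝ (Fin 3)) 1) :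
    θ 0 ^ 2 + θ 1 ^ 2 + θ 2 ^ 2 = 1 := by
  have hnorm : ‖θ‖ = 1 := by simpa using hθ
  have := EuclideanSpace.norm_eq θ
  rw [hnorm, Fin.sum_univ_three, Real.norm_eq_abs, Real.norm_eq_abs, Real.norm_eq_abs,
    sq_abs, sq_abs, sq_abs] at this
  have h0 : (0:ℝ) ≤ θ 0 ^2 + θ 1 ^2 + θ 2 ^2 := by positivity
  nlinarith [Real.sq_sqrt h0]

lemma sph_cover : sphere (0 : EuclideanSpace ℝ (Fin 3)) 1 ⊆
    sph '' (Set.Icc 0 π ×ˢ Set.Icc 0 (2*π)) := by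
  intro θ hθ
  have hsum := sum_sq_of_sphere3 hθ
  have h21 : θ 2 ^ 2 ≤ 1 := by nlinarith
  have hm1 : -1 ≤ θ 2 := by nlinarith
  have hp1 : θ 2 ≤ 1 := by nlinarith
  set φ := Real.arccos (θ 2) with hφ
  have hφmem : φ ∈ Set.Icc (0:ℝ) π := ⟨Real.arccos_nonneg _, Real.arccos_le_pi _⟩
  have hcosφ : Real.cos φ = θ 2 := Real.cos_arccos hm1 hp1
  set r := Real.sqrt (θ 0 ^2 + θ 1 ^2) with hr
  have hr0 : 0 ≤ r := Real.sqrt_nonneg _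
  have hrsq : r^2 = θ 0 ^2 + θ 1 ^2 := Real.sq_sqrt (by positivity)
  have hsinφ : Real.sin φ = r := by
    rw [hφ, Real.sin_arccos, hr]
    congr 1
    linarith
  rcases eq_or_lt_of_le hr0 with hr0' | hrpos
  · -- r = 0 : θ 0 = θ 1 = 0
    have hθ0 : θ 0 = 0 := by nlinarith
    have hθ1 : θ 1 = 0 := by nlinarith
    refine ⟨(φ, 0), ⟨hφmem, by constructor <;> [norm_num; positivity]⟩, PiLp.ext fun j => ?_⟩
    fin_cases j <;>
      simp [hsinφ, ← hr0', hθ0, hθ1, hcosφ]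
  · have hrne : r ≠ 0 := ne_of_gt hrpos
    have hab : (θ 0 / r)^2 + (θ 1 / r)^2 = 1 := by
      field_simp
      linarith
    obtain ⟨ψ, hψmem, hcψ, hsψ⟩ := exists_angle hab
    refine ⟨(φ, ψ), ⟨hφmem, hψmem⟩, PiLp.ext fun j => ?_⟩
    fin_cases j <;> simp [hsinφ, hcψ, hsψ, hcosφ] <;> field_simp
lemma finite3 : μH[(2:ℝ)] (sphere (0 : EuclideanSpace ℝ (Fin 3)) 1) < ⊤ := by
  apply lt_of_le_of_lt (measure_mono sph_cover)
  apply lt_of_le_of_lt (sph_lip.hausdorffMeasure_image_le (by norm_num) _)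
  rw [hausdorffMeasure_prod_real, Measure.volume_eq_prod, Measure.prod_prod,
    Real.volume_Icc, Real.volume_Icc]
  exact ENNReal.mul_lt_top (ENNReal.rpow_lt_top_of_nonneg (by norm_num) ENNReal.coe_ne_top) (ENNReal.mul_lt_top (by simp) (by simp; exact ENNReal.mul_lt_top (by norm_num) ENNReal.ofReal_lt_top))


lemma abs_coord_le {d : ℕ} (θ : EuclideanSpace ℝ (Fin d)) (j : Fin d) : |θ j| ≤ ‖θ‖ := by
  have h1 : |θ j| = ‖EuclideanSpace.single j (1:ℝ)‖ * ‖θ‖ ∨ |θ j| ≤ ‖EuclideanSpace.single j (1:ℝ)‖ * ‖θ‖ :=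
    Or.inr ?_
  · rcases h1 with h | h
    · rw [h, EuclideanSpace.norm_single]; simp
    · simpa [EuclideanSpace.norm_single] using h
  · have := abs_real_inner_le_norm (EuclideanSpace.single j (1:ℝ)) θ
    rwa [EuclideanSpace.inner_single_left, map_one, one_mul] at this

lemma norm_cprod_le {d : ℕ} (l : List (Fin d)) (θ : EuclideanSpace ℝ (Fin d)) (hθ : ‖θ‖ = 1) :
    ‖(l.map fun i => ((θ i : ℝ) : ℂ)).prod‖ ≤ 1 := by
  induction l with
  | nil => simp
  | cons j l ih =>
    rw [List.map_cons, List.prod_cons, norm_mul]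
    have h1 : ‖((θ j : ℝ) : ℂ)‖ ≤ 1 := by
      rw [Complex.norm_real, Real.norm_eq_abs]
      exact (abs_coord_le θ j).trans_eq hθ
    nlinarith [norm_nonneg (((θ j : ℝ)):ℂ), norm_nonneg ((l.map fun i => ((θ i : ℝ) : ℂ)).prod)]

lemma cont_cprod {d : ℕ} (l : List (Fin d)) :
    Continuous fun θ : EuclideanSpace ℝ (Fin d) => (l.map fun i => ((θ i : ℝ) : ℂ)).prod := by
  induction l with
  | nil => simpa using continuous_const
  | cons j l ih =>
    simp only [List.map_cons, List.prod_cons]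
    exact (Complex.continuous_ofReal.comp (EuclideanSpace.proj (𝕜 := ℝ) j).continuous).mul ih

lemma norm_exp_I_mul (k r : ℝ) : ‖Complex.exp (Complex.I * k * r)‖ = 1 := by
  rw [show Complex.I * (k:ℂ) * (r:ℂ) = ((k*r : ℝ):ℂ) * Complex.I by push_cast; ring]
  exact Complex.norm_exp_ofReal_mul_I _

lemma list_range {α β : Type*} (f : α → β) : ∀ (L : List β), (∀ y ∈ L, y ∈ Set.range f) →
    ∃ l : List α, L = l.map f := by
  intro L
  induction L with
  | nil => exact fun _ => ⟨[], rfl⟩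
  | cons b L ih =>
    intro hmem
    obtain ⟨a, ha⟩ := hmem b List.mem_cons_self
    obtain ⟨l, hl⟩ := ih fun y hy => hmem y (List.mem_cons_of_mem _ hy)
    exact ⟨a :: l, by rw [List.map_cons, ha, hl]⟩

abbrev Sph (d : ℕ) : Set (EuclideanSpace ℝ (Fin d)) := sphere (0 : EuclideanSpace ℝ (Fin d)) 1

def coordFun (d : ℕ) (i : Fin d) : C(Sph d, ℂ) :=
  ⟨fun p => (((p : EuclideanSpace ℝ (Fin d)) i : ℝ) : ℂ),
    Complex.continuous_ofReal.comp
      ((EuclideanSpace.proj (𝕜 := ℝ) i).continuous.comp continuous_subtype_val)⟩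

@[simp] lemma coordFun_apply (d : ℕ) (i : Fin d) (p : Sph d) :
    coordFun d i p = (((p : EuclideanSpace ℝ (Fin d)) i : ℝ) : ℂ) := rfl

open scoped Classical in
def ext' (d : ℕ) (u : C(Sph d, ℂ)) (θ : EuclideanSpace ℝ (Fin d)) : ℂ :=
  if hθ : θ ∈ Sph d then u ⟨θ, hθ⟩ else 0

open scoped Classical in
lemma ext'_eq {d : ℕ} (u : C(Sph d, ℂ)) {θ : EuclideanSpace ℝ (Fin d)} (hθ : θ ∈ Sph d) :
    ext' d u θ = u ⟨θ, hθ⟩ := dif_pos hθ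

lemma eval_prod {d : ℕ} (l : List (Fin d)) (p : Sph d) :
    ((l.map (coordFun d)).prod) p
      = (l.map fun i => (((p : EuclideanSpace ℝ (Fin d)) i : ℝ) : ℂ)).prod := by
  induction l with
  | nil => simp
  | cons j l ih => simp [List.map_cons, List.prod_cons, ih]

theorem key (d : ℕ) (k : ℝ) (hk : 0 < k) [IsFiniteMeasure (sphereMeasure d)]
    (B : Set (EuclideanSpace ℝ (Fin d))) (hBopen : IsOpen B) (hBne : B.Nonempty)
    (g : Lp ℂ 2 (sphereMeasure d))
    (hvanish : ∀ x ∈ B, herglotz d k g x = 0) :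
    g = 0 := by
  classical
  have hae : ∀ᵐ θ ∂(sphereMeasure d), θ ∈ sphere (0 : EuclideanSpace ℝ (Fin d)) 1 := by
    unfold sphereMeasure
    exact ae_restrict_mem isClosed_sphere.measurableSet
  have hgm : AEStronglyMeasurable (g : EuclideanSpace ℝ (Fin d) → ℂ) (sphereMeasure d) :=
    Lp.aestronglyMeasurable g
  have hgi : Integrable (g : EuclideanSpace ℝ (Fin d) → ℂ) (sphereMeasure d) :=
    memLp_one_iff_integrable.mp ((Lp.memLp g).mono_exponent one_le_two)
  -- continuity of the exponential factor
  have contexp : ∀ (r : EuclideanSpace ℝ (Fin d) → ℝ), Continuous r →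
      Continuous fun θ : EuclideanSpace ℝ (Fin d) => Complex.exp (Complex.I * k * ((r θ : ℝ) : ℂ)) := by
    intro r hr
    exact Complex.continuous_exp.comp (continuous_const.mul (Complex.continuous_ofReal.comp hr))
  -- the main induction
  have main : ∀ (l : List (Fin d)) (x : EuclideanSpace ℝ (Fin d)), x ∈ B →
      ∫ θ, ((l.map fun i => ((θ i : ℝ) : ℂ)).prod *
        Complex.exp (Complex.I * k * ((⟪x, θ⟫ : ℝ) : ℂ))) * (g : EuclideanSpace ℝ (Fin d) → ℂ) θ
        ∂(sphereMeasure d) = 0 := by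
    intro l
    induction l with
    | nil =>
      intro x hx
      have := hvanish x hx
      unfold herglotz at this
      simpa using this
    | cons i l ih =>
      intro x hx
      obtain ⟨ε, εpos, hball⟩ := Metric.isOpen_iff.mp hBopen x hx
      set c : EuclideanSpace ℝ (Fin d) → ℂ :=
        fun θ => (l.map fun i => ((θ i : ℝ) : ℂ)).prod with hc_def
      set F : ℝ → EuclideanSpace ℝ (Fin d) → ℂ := fun t θ =>
        (c θ * Complex.exp (Complex.I * k * ((⟪x, θ⟫ + t * θ i : ℝ) : ℂ))) *
          (g : EuclideanSpace ℝ (Fin d) → ℂ) θ with hF_def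
      set F' : ℝ → EuclideanSpace ℝ (Fin d) → ℂ := fun t θ =>
        (c θ * (Complex.I * k * ((θ i : ℝ) : ℂ) *
          Complex.exp (Complex.I * k * ((⟪x, θ⟫ + t * θ i : ℝ) : ℂ)))) *
          (g : EuclideanSpace ℝ (Fin d) → ℂ) θ with hF'_def
      have hinner : ∀ (t : ℝ) (θ : EuclideanSpace ℝ (Fin d)),
          ⟪x + t • EuclideanSpace.single i (1:ℝ), θ⟫ = ⟪x, θ⟫ + t * θ i := by
        intro t θ
        rw [inner_add_left, real_inner_smul_left, EuclideanSpace.inner_single_left]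
        simp
      have hcont : ∀ t : ℝ, Continuous fun θ : EuclideanSpace ℝ (Fin d) =>
          c θ * Complex.exp (Complex.I * k * ((⟪x, θ⟫ + t * θ i : ℝ) : ℂ)) := by
        intro t
        exact (cont_cprod l).mul (contexp _ ((continuous_const.inner continuous_id).add
          (continuous_const.mul (EuclideanSpace.proj (𝕜 := ℝ) i).continuous)))
      have hFmeas : ∀ t : ℝ, AEStronglyMeasurable (F t) (sphereMeasure d) := by
        intro t
        exact ((hcont t).aestronglyMeasurable).mul hgm
      have hF'meas : AEStronglyMeasurable (F' 0) (sphereMeasure d) := by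
        apply AEStronglyMeasurable.mul _ hgm
        apply Continuous.aestronglyMeasurable
        apply (cont_cprod l).mul
        apply Continuous.mul
        · exact (continuous_const.mul (Complex.continuous_ofReal.comp
            (EuclideanSpace.proj (𝕜 := ℝ) i).continuous))
        · exact contexp _ ((continuous_const.inner continuous_id).add
            (continuous_const.mul (EuclideanSpace.proj (𝕜 := ℝ) i).continuous))
      have hbd : ∀ᵐ θ ∂(sphereMeasure d), ∀ t ∈ Metric.ball (0:ℝ) ε,
          ‖F' t θ‖ ≤ k * ‖(g : EuclideanSpace ℝ (Fin d) → ℂ) θ‖ := by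
        filter_upwards [hae] with θ hθs
        intro t _
        have h1 : ‖θ‖ = 1 := mem_sphere_zero_iff_norm.mp hθs
        have h2 : |θ i| ≤ 1 := (abs_coord_le θ i).trans_eq h1
        have h3 : ‖c θ‖ ≤ 1 := norm_cprod_le l θ h1
        have hexp : ‖Complex.exp (Complex.I * k * ((⟪x, θ⟫ + t * θ i : ℝ) : ℂ))‖ = 1 :=
          norm_exp_I_mul k _
        rw [hF'_def]
        simp only [norm_mul, hexp, Complex.norm_I, Complex.norm_real, Real.norm_eq_abs,
          mul_one, one_mul, abs_of_pos hk]
        have h4 := norm_nonneg (c θ)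
        have h5 := norm_nonneg ((g : EuclideanSpace ℝ (Fin d) → ℂ) θ)
        have h6 := abs_nonneg (θ i)
        have h7 : ‖c θ‖ * |θ i| ≤ 1 := by nlinarith
        calc ‖c θ‖ * (k * |θ i|) * ‖(g : EuclideanSpace ℝ (Fin d) → ℂ) θ‖
            = (‖c θ‖ * |θ i|) * (k * ‖(g : EuclideanSpace ℝ (Fin d) → ℂ) θ‖) := by ring
          _ ≤ 1 * (k * ‖(g : EuclideanSpace ℝ (Fin d) → ℂ) θ‖) := by
              apply mul_le_mul_of_nonneg_right h7; positivity
          _ = k * ‖(g : EuclideanSpace ℝ (Fin d) → ℂ) θ‖ := one_mul _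
      have hFint : Integrable (F 0) (sphereMeasure d) := by
        apply Integrable.bdd_mul (c := 1) hgi ((hcont 0).aestronglyMeasurable)
        filter_upwards [hae] with θ hθs
        have h1 : ‖θ‖ = 1 := mem_sphere_zero_iff_norm.mp hθs
        rw [norm_mul, norm_exp_I_mul k]
        simpa using norm_cprod_le l θ h1
      have hbint : Integrable (fun θ => k * ‖(g : EuclideanSpace ℝ (Fin d) → ℂ) θ‖)
          (sphereMeasure d) := hgi.norm.const_mul k
      have hdiff : ∀ᵐ θ ∂(sphereMeasure d), ∀ t ∈ Metric.ball (0:ℝ) ε,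
          HasDerivAt (fun s => F s θ) (F' t θ) t := by
        apply Eventually.of_forall
        intro θ t _
        have h1 : HasDerivAt (fun s : ℝ => ⟪x, θ⟫ + s * θ i) (θ i) t := by
          simpa using ((hasDerivAt_id t).mul_const (θ i)).const_add (⟪x, θ⟫ : ℝ)
        have h2 := (h1.ofReal_comp).const_mul (Complex.I * (k:ℂ))
        have h3 := h2.cexp
        have h4 := (h3.const_mul (c θ)).mul_const ((g : EuclideanSpace ℝ (Fin d) → ℂ) θ)
        refine h4.congr_deriv ?_
        rw [hF'_def]
        ring
      obtain ⟨-, hder⟩ := hasDerivAt_integral_of_dominated_loc_of_deriv_le (Metric.ball_mem_nhds 0 εpos)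
        (Eventually.of_forall hFmeas) hFint hF'meas hbd hbint hdiff
      have hzero : ∀ t ∈ Metric.ball (0:ℝ) ε, (∫ θ, F t θ ∂(sphereMeasure d)) = 0 := by
        intro t ht
        have hmem : x + t • EuclideanSpace.single i (1:ℝ) ∈ B := by
          apply hball
          rw [Metric.mem_ball, dist_self_add_left, norm_smul, EuclideanSpace.norm_single]
          simpa using (by simpa [Real.dist_eq] using ht : |t| < ε)
        have := ih (x + t • EuclideanSpace.single i (1:ℝ)) hmem
        rw [← this]
        apply integral_congr_ae
        apply Eventually.of_forall
        intro θ
        rw [hF_def]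
        simp only [hinner t θ, hc_def]
      have heq : (fun t => ∫ θ, F t θ ∂(sphereMeasure d)) =ᶠ[nhds (0:ℝ)] fun _ => 0 :=
        eventually_of_mem (Metric.ball_mem_nhds 0 εpos) hzero
      have hder0 : HasDerivAt (fun _ : ℝ => (0:ℂ)) (∫ θ, F' 0 θ ∂(sphereMeasure d)) 0 :=
        hder.congr_of_eventuallyEq heq.symm
      have hint0 : (∫ θ, F' 0 θ ∂(sphereMeasure d)) = 0 :=
        ((hasDerivAt_const (0:ℝ) (0:ℂ)).unique hder0).symm
      -- relate ∫ F' 0 to the goal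
      have hpt : ∀ θ : EuclideanSpace ℝ (Fin d), F' 0 θ =
          (Complex.I * k) * ((((i :: l).map fun j => ((θ j : ℝ) : ℂ)).prod *
            Complex.exp (Complex.I * k * ((⟪x, θ⟫ : ℝ) : ℂ))) *
            (g : EuclideanSpace ℝ (Fin d) → ℂ) θ) := by
        intro θ
        rw [hF'_def, hc_def]
        simp only [List.map_cons, List.prod_cons, zero_mul, add_zero]
        ring
      rw [show (fun θ : EuclideanSpace ℝ (Fin d) => F' 0 θ) = _ from funext hpt,
        integral_const_mul] at hint0
      rcases mul_eq_zero.mp hint0 with h | h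
      · exfalso
        rcases mul_eq_zero.mp h with h' | h'
        · exact Complex.I_ne_zero h'
        · exact (Complex.ofReal_ne_zero.mpr (ne_of_gt hk)) h'
      · exact h
  -- Stone-Weierstrass part
  obtain ⟨x0, hx0⟩ := hBne
  set h : EuclideanSpace ℝ (Fin d) → ℂ :=
    fun θ => Complex.exp (Complex.I * k * ((⟪x0, θ⟫ : ℝ) : ℂ)) * (g : EuclideanSpace ℝ (Fin d) → ℂ) θ
    with hh_def
  have hhm : AEStronglyMeasurable h (sphereMeasure d) := by
    apply AEStronglyMeasurable.mul _ hgm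
    exact (contexp _ (continuous_const.inner continuous_id)).aestronglyMeasurable
  have hh_int : Integrable h (sphereMeasure d) := by
    rw [hh_def]
    apply Integrable.bdd_mul (c := 1) hgi
      ((contexp _ (continuous_const.inner continuous_id)).aestronglyMeasurable)
    exact Eventually.of_forall fun θ => le_of_eq (norm_exp_I_mul k _)
  -- measurability and integrability of extended continuous functions against h
  have hextm : ∀ u : C(Sph d, ℂ), AEStronglyMeasurable (ext' d u) (sphereMeasure d) := by
    intro u
    have hcont : ContinuousOn (ext' d u) (Sph d) := by
      rw [continuousOn_iff_continuous_restrict]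
      have hres : (Sph d).domRestrict (ext' d u) = fun p : Sph d => u p := by
        funext p
        simp only [Set.domRestrict_apply]
        exact ext'_eq u p.2
      rw [hres]
      exact u.continuous
    unfold sphereMeasure
    exact hcont.aestronglyMeasurable isClosed_sphere.measurableSet
  have hJint : ∀ u : C(Sph d, ℂ), Integrable (fun θ => ext' d u θ * h θ) (sphereMeasure d) := by
    intro u
    apply Integrable.bdd_mul (c := ‖u‖) hh_int (hextm u)
    filter_upwards [hae] with θ hθ
    rw [ext'_eq u hθ]
    exact u.norm_coe_le_norm _
  set J : C(Sph d, ℂ) → ℂ := fun u => ∫ θ, ext' d u θ * h θ ∂(sphereMeasure d) with hJ_def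
  have Jadd : ∀ u v, J (u + v) = J u + J v := by
    intro u v
    simp only [hJ_def]
    rw [← integral_add (hJint u) (hJint v)]
    apply integral_congr_ae
    apply Eventually.of_forall
    intro θ
    unfold ext'
    dsimp only
    split
    · rw [ContinuousMap.add_apply]; ring
    · ring
  have Jsmul : ∀ (a : ℂ) (u : C(Sph d, ℂ)), J (a • u) = a * J u := by
    intro a u
    simp only [hJ_def]
    rw [← integral_const_mul]
    apply integral_congr_ae
    apply Eventually.of_forall
    intro θ
    unfold ext'
    dsimp only
    split
    · rw [ContinuousMap.smul_apply, smul_eq_mul]; ring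
    · ring
  have Jzero : J 0 = 0 := by
    simp only [hJ_def]
    rw [show (0:ℂ) = ∫ _θ, (0:ℂ) ∂(sphereMeasure d) from (integral_zero _ _).symm]
    apply integral_congr_ae
    apply Eventually.of_forall
    intro θ
    unfold ext'
    dsimp only
    split
    · rw [ContinuousMap.zero_apply]; ring
    · ring
  set S : Set C(Sph d, ℂ) := Set.range (coordFun d) with hS_def
  have hmono : ∀ u ∈ Submonoid.closure S, J u = 0 := by
    intro u hu
    obtain ⟨L, hLmem, hLprod⟩ := Submonoid.exists_list_of_mem_closure hu
    obtain ⟨l, rfl⟩ := list_range (coordFun d) L (by simpa [hS_def] using hLmem)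
    subst hLprod
    simp only [hJ_def]
    rw [← main l x0 hx0]
    apply integral_congr_ae
    filter_upwards [hae] with θ hθ
    rw [ext'_eq _ hθ, eval_prod l ⟨θ, hθ⟩, hh_def]
    ring
  have hspan : ∀ u, u ∈ StarAlgebra.adjoin ℂ S → J u = 0 := by
    have hstarS : S ∪ star S = S := by
      have hsc : ∀ j, star (coordFun d j) = coordFun d j := by
        intro j
        ext p
        simp [coordFun, Complex.conj_ofReal]
      apply Set.union_eq_self_of_subset_right
      intro v hv
      rw [Set.mem_star] at hv
      obtain ⟨j, hj⟩ := hv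
      exact ⟨j, by rw [← star_star v, ← hj, hsc]⟩
    intro u hu
    have hu' : u ∈ Submodule.span ℂ ((Submonoid.closure S : Submonoid C(Sph d, ℂ)) :
        Set C(Sph d, ℂ)) := by
      have hsp := StarAlgebra.adjoin_eq_span (R := ℂ) S
      rw [hstarS] at hsp
      have h2 : u ∈ Subalgebra.toSubmodule (StarAlgebra.adjoin ℂ S).toSubalgebra := hu
      rwa [hsp] at h2
    exact Submodule.span_induction (p := fun v _ => J v = 0)
      (fun v hv => hmono v hv) Jzero
      (fun v w _ _ hv hw => by
        show J (v + w) = 0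
        rw [Jadd, show J v = 0 from hv, show J w = 0 from hw, add_zero])
      (fun a v _ hv => by
        show J (a • v) = 0
        rw [Jsmul, show J v = 0 from hv, mul_zero]) hu'
  have hsep : (StarAlgebra.adjoin ℂ S).toSubalgebra.SeparatesPoints := by
    intro p q hpq
    have hne : ∃ j, (p : EuclideanSpace ℝ (Fin d)) j ≠ (q : EuclideanSpace ℝ (Fin d)) j := by
      by_contra hcon
      push_neg at hcon
      exact hpq (Subtype.ext (PiLp.ext hcon))
    obtain ⟨j, hj⟩ := hne
    refine ⟨_, ⟨coordFun d j, StarAlgebra.subset_adjoin ℂ S ⟨j, rfl⟩, rfl⟩, ?_⟩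
    simp only [coordFun_apply]
    exact fun hcc => hj (Complex.ofReal_inj.mp hcc)
  have hdense := ContinuousMap.starSubalgebra_topologicalClosure_eq_top_of_separatesPoints
    (StarAlgebra.adjoin ℂ S) hsep
  have hcl : closure ((StarAlgebra.adjoin ℂ S : StarSubalgebra ℂ C(Sph d, ℂ)) :
      Set C(Sph d, ℂ)) = Set.univ := by
    rw [← StarSubalgebra.topologicalClosure_coe, hdense]
    rfl
  have Jbound : ∀ u : C(Sph d, ℂ), ‖J u‖ ≤ ‖u‖ * ∫ θ, ‖h θ‖ ∂(sphereMeasure d) := by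
    intro u
    simp only [hJ_def]
    refine (norm_integral_le_integral_norm _).trans ?_
    rw [← integral_const_mul]
    apply integral_mono_ae (hJint u).norm (hh_int.norm.const_mul _)
    filter_upwards [hae] with θ hθ
    simp only [norm_mul]
    rw [ext'_eq u hθ]
    exact mul_le_mul_of_nonneg_right (u.norm_coe_le_norm _) (norm_nonneg _)
  have Jall : ∀ v : C(Sph d, ℂ), J v = 0 := by
    intro v
    have hv : v ∈ closure ((StarAlgebra.adjoin ℂ S : StarSubalgebra ℂ C(Sph d, ℂ)) :
        Set C(Sph d, ℂ)) := hcl ▸ Set.mem_univ v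
    obtain ⟨u, hu, hlim⟩ := mem_closure_iff_seq_limit.mp hv
    have hJu : ∀ n, J (u n) = 0 := fun n => hspan _ (hu n)
    have Jneg : ∀ w : C(Sph d, ℂ), J (-w) = -J w := by
      intro w
      rw [show -w = (-1 : ℂ) • w from (neg_one_smul ℂ w).symm, Jsmul]
      ring
    have Jsub : ∀ u' w : C(Sph d, ℂ), J (u' - w) = J u' - J w := by
      intro u' w
      rw [sub_eq_add_neg, Jadd, Jneg, sub_eq_add_neg]
    set C := ∫ θ, ‖h θ‖ ∂(sphereMeasure d) with hC_def
    have hbd : ∀ n, ‖J v‖ ≤ dist (u n) v * C := by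
      intro n
      have h1 := Jbound (v - u n)
      rw [Jsub, hJu n, sub_zero] at h1
      calc ‖J v‖ ≤ ‖v - u n‖ * C := h1
        _ = dist (u n) v * C := by rw [← dist_eq_norm, dist_comm]
    have hten : Tendsto (fun n => dist (u n) v * C) atTop (nhds 0) := by
      have := (tendsto_iff_dist_tendsto_zero.mp hlim).mul_const C
      simpa using this
    have hle : ‖J v‖ ≤ 0 := ge_of_tendsto hten (Eventually.of_forall hbd)
    exact norm_le_zero_iff.mp hle
  -- every bounded continuous function integrates to zero against h
  have hbcf : ∀ f : BoundedContinuousFunction (EuclideanSpace ℝ (Fin d)) ℂ,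
      ∫ θ, f θ * h θ ∂(sphereMeasure d) = 0 := by
    intro f
    have hJv := Jall ((f.toContinuousMap).restrict (Sph d))
    simp only [hJ_def] at hJv
    rw [← hJv]
    apply integral_congr_ae
    filter_upwards [hae] with θ hθ
    rw [ext'_eq _ hθ]
    rfl
  -- conclude  g = 0
  set w0 : EuclideanSpace ℝ (Fin d) → ℂ := fun θ => (starRingEnd ℂ) (h θ) with hw0_def
  have hw0m : AEStronglyMeasurable w0 (sphereMeasure d) :=
    RCLike.continuous_conj.comp_aestronglyMeasurable hhm
  have hw0mem : MemLp w0 2 (sphereMeasure d) := by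
    apply MemLp.of_le (Lp.memLp g) hw0m
    apply Eventually.of_forall
    intro θ
    simp only [hw0_def, hh_def, RCLike.norm_conj, norm_mul, norm_exp_I_mul, one_mul, le_refl]
  set w := hw0mem.toLp w0 with hw_def
  have hwzero : ∀ f : Lp ℂ 2 (sphereMeasure d),
      f ∈ (Lp.boundedContinuousFunction ℂ 2 (sphereMeasure d) :
        Set (Lp ℂ 2 (sphereMeasure d))) → (inner ℂ w f : ℂ) = 0 := by
    intro f hf
    have hf' : f ∈ ((BoundedContinuousFunction.toLp (E := ℂ) 2
        (sphereMeasure d) ℂ).range).toAddSubgroup := by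
      rw [BoundedContinuousFunction.range_toLp]
      exact hf
    obtain ⟨f0, rfl⟩ := LinearMap.mem_range.mp hf'
    rw [L2.inner_def]
    rw [← hbcf f0]
    apply integral_congr_ae
    filter_upwards [hw0mem.coeFn_toLp,
      BoundedContinuousFunction.coeFn_toLp 2 (sphereMeasure d) ℂ f0] with θ h1 h2
    rw [RCLike.inner_apply, h1, ContinuousLinearMap.coe_coe, h2]
    simp only [hw0_def, Complex.conj_conj]
  have hD : Dense (Lp.boundedContinuousFunction ℂ 2 (sphereMeasure d) :
      Set (Lp ℂ 2 (sphereMeasure d))) :=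
    Lp.boundedContinuousFunction_dense ℂ (sphereMeasure d) (by norm_num)
  have hfun : (fun f : Lp ℂ 2 (sphereMeasure d) => (inner ℂ w f : ℂ)) = fun _ => 0 :=
    Continuous.ext_on hD (continuous_const.inner continuous_id) continuous_const hwzero
  have hww : (inner ℂ w w : ℂ) = 0 := congrFun hfun w
  have hwz : w = 0 := inner_self_eq_zero.mp hww
  have hw0ae : w0 =ᵐ[sphereMeasure d] 0 := by
    have h1 := hw0mem.coeFn_toLp
    rw [← hw_def, hwz] at h1
    exact h1.symm.trans (Lp.coeFn_zero ℂ 2 (sphereMeasure d))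
  have hgae : (g : EuclideanSpace ℝ (Fin d) → ℂ) =ᵐ[sphereMeasure d]
      (0 : EuclideanSpace ℝ (Fin d) → ℂ) := by
    filter_upwards [hw0ae] with θ hθ
    simp only [hw0_def, Pi.zero_apply] at hθ ⊢
    have hh0 : h θ = 0 := star_eq_zero.mp hθ
    simp only [hh_def] at hh0
    exact (mul_eq_zero.mp hh0).resolve_left (Complex.exp_ne_zero _)
  exact Lp.ext (hgae.trans (Lp.coeFn_zero ℂ 2 (sphereMeasure d)).symm)

end St8

theorem statement8 (d : ℕ) (hd : d = 2 ∨ d = 3) (k : ℝ) (hk : 0 < k)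
    (B : Set (EuclideanSpace ℝ (Fin d))) (hBopen : IsOpen B) (hBne : B.Nonempty)
    (g : Lp ℂ 2 (sphereMeasure d))
    (hvanish : ∀ x ∈ B, herglotz d k g x = 0) :
    g = 0 := by
  haveI : IsFiniteMeasure (sphereMeasure d) := by
    constructor
    unfold sphereMeasure
    rw [Measure.restrict_apply_univ]
    rcases hd with h | h <;> subst h
    · rw [show ((2:ℕ):ℝ) - 1 = 1 by norm_num]
      exact St8.finite2
    · rw [show ((3:ℕ):ℝ) - 1 = 2 by norm_num]
      exact St8.finite3
  exact St8.key d k hk B hBopen hBne g hvanish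
end
end
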